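/- arXiv:2306.03200 — 4 statements merged into one kernel-verified Lean document; each statement's English description precedes it below -/
import Mathlib

section
/- Every vector of norm 4 in the E8 lattice can be written as the sum of two vectors of norm 2 (roots) in E8. -/
noncomputable section

/-- The standard inner product on ℝ⁸. -/
def dot8 (u v : Fin 8 → ℝ) : ℝ := ∑ i, u i * v i

/-- Membership in the E8 lattice: all coordinates integers or all half-odd-integers,
with even coordinate sum. -/
def inE8 (v : Fin 8 → ℝ) : Prop :=
  ((∀ i, ∃ n : ℤ, v i = (n : ℝ)) ∨ (∀ i, ∃ n : ℤ, v i = (n : ℝ) + 1 / 2)) ∧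
    ∃ m : ℤ, (∑ i, v i) = 2 * (m : ℝ)

lemma sum_two {j l : Fin 8} (hjl : j ≠ l) (x y : ℝ) :
    ∑ i, (if i = j then x else if i = l then y else 0) = x + y := by
  have h : ∀ i : Fin 8, (if i = j then x else if i = l then y else 0)
      = (if i = j then x else 0) + (if i = l then y else 0) := by
    intro i
    by_cases h1 : i = j
    · subst h1; simp [hjl]
    · by_cases h2 : i = l <;> simp [h1, h2, Ne.symm hjl]
  rw [Finset.sum_congr rfl fun i _ => h i, Finset.sum_add_distrib,
    Finset.sum_ite_eq' Finset.univ j (fun _ => x), Finset.sum_ite_eq' Finset.univ l (fun _ => y)]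
  simp

lemma master (v : Fin 8 → ℝ) (hv2 : ∃ m : ℤ, (∑ i, v i) = 2 * (m : ℝ))
    (h4 : dot8 v v = 4) (j l : Fin 8) (hjl : j ≠ l) (x y : ℝ)
    (hx : x = 1 ∨ x = -1) (hy : y = 1 ∨ y = -1)
    (hvb : v j * x + v l * y = 2)
    (haint : (∀ i, ∃ n : ℤ, (v i - if i = j then x else if i = l then y else 0) = (n : ℝ)) ∨
             (∀ i, ∃ n : ℤ, (v i - if i = j then x else if i = l then y else 0) = (n : ℝ) + 1/2)) :
    ∃ a b : Fin 8 → ℝ, inE8 a ∧ inE8 b ∧ dot8 a a = 2 ∧ dot8 b b = 2 ∧ v = a + b := by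
  obtain ⟨m, hm⟩ := hv2
  set b : Fin 8 → ℝ := fun i => if i = j then x else if i = l then y else 0 with hbdef
  set a : Fin 8 → ℝ := fun i => v i - b i with hadef
  have hxx : x * x = 1 := by rcases hx with rfl | rfl <;> norm_num
  have hyy : y * y = 1 := by rcases hy with rfl | rfl <;> norm_num
  have hsumb : ∑ i, b i = x + y := sum_two hjl x y
  have hbb : dot8 b b = 2 := by
    have h : ∀ i : Fin 8, b i * b i = if i = j then x * x else if i = l then y * y else 0 := by
      intro i
      by_cases h1 : i = j
      · simp [hbdef, h1]
      · by_cases h2 : i = l <;> simp [hbdef, h1, h2, Ne.symm hjl]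
    rw [dot8, Finset.sum_congr rfl fun i _ => h i, sum_two hjl, hxx, hyy]
    norm_num
  have hvbv : dot8 v b = 2 := by
    have h : ∀ i : Fin 8, v i * b i = if i = j then v j * x else if i = l then v l * y else 0 := by
      intro i
      by_cases h1 : i = j
      · subst h1; simp [hbdef]
      · by_cases h2 : i = l
        · subst h2; simp [hbdef, h1]
        · simp [hbdef, h1, h2]
    rw [dot8, Finset.sum_congr rfl fun i _ => h i, sum_two hjl, hvb]
  have haa : dot8 a a = 2 := by
    have h : dot8 a a = dot8 v v - 2 * dot8 v b + dot8 b b := by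
      simp only [dot8, Finset.mul_sum, ← Finset.sum_sub_distrib, ← Finset.sum_add_distrib]
      exact Finset.sum_congr rfl fun i _ => by simp only [hadef]; ring
    rw [h, h4, hvbv, hbb]; norm_num
  have hbsum : ∃ m' : ℤ, x + y = 2 * (m' : ℝ) := by
    rcases hx with rfl | rfl <;> rcases hy with rfl | rfl
    exacts [⟨1, by norm_num⟩, ⟨0, by norm_num⟩, ⟨0, by norm_num⟩, ⟨-1, by norm_num⟩]
  obtain ⟨m', hm'⟩ := hbsum
  have hbint : ∀ i, ∃ n : ℤ, b i = (n : ℝ) := by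
    intro i
    by_cases h1 : i = j
    · rcases hx with rfl | rfl
      exacts [⟨1, by simp [hbdef, h1]⟩, ⟨-1, by simp [hbdef, h1]⟩]
    · by_cases h2 : i = l
      · rcases hy with rfl | rfl
        exacts [⟨1, by simp [hbdef, h1, h2, Ne.symm hjl]⟩, ⟨-1, by simp [hbdef, h1, h2, Ne.symm hjl]⟩]
      · exact ⟨0, by simp [hbdef, h1, h2]⟩
  have hasum : ∑ i, a i = 2 * ((m - m' : ℤ) : ℝ) := by
    simp only [hadef]
    rw [Finset.sum_sub_distrib, hm, hsumb, hm']
    push_cast; ring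
  refine ⟨a, b, ⟨haint, ⟨m - m', hasum⟩⟩, ⟨Or.inl hbint, ⟨m', hsumb.trans hm'⟩⟩, haa, hbb, ?_⟩
  funext i
  simp only [Pi.add_apply, hadef]
  ring

lemma int_class (n : Fin 8 → ℤ) (h : ∑ i, n i ^ 2 = 4) :
    (∃ j, n j ^ 2 = 4 ∧ ∀ i, i ≠ j → n i = 0) ∨
      (∃ j k : Fin 8, j ≠ k ∧ n j ^ 2 = 1 ∧ n k ^ 2 = 1) := by
  by_cases h4 : ∃ j, n j ^ 2 = 4
  · left
    obtain ⟨j, hj⟩ := h4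
    refine ⟨j, hj, fun i hi => ?_⟩
    have htot := Finset.add_sum_erase Finset.univ (fun i => n i ^ 2) (Finset.mem_univ j)
    have hrest : ∑ x ∈ Finset.univ.erase j, n x ^ 2 = 0 := by
      omega
    have := (Finset.sum_eq_zero_iff_of_nonneg (fun x _ => sq_nonneg (n x))).mp hrest i
      (Finset.mem_erase.mpr ⟨hi, Finset.mem_univ i⟩)
    exact pow_eq_zero_iff (by norm_num) |>.mp this
  · right
    push_neg at h4
    have h1 : ∀ i, n i ^ 2 ≤ 1 := by
      intro i
      have hle : n i ^ 2 ≤ 4 := by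
        have := Finset.single_le_sum (f := fun i => n i ^ 2) (fun x _ => sq_nonneg (n x))
          (Finset.mem_univ i)
        omega
      have hne := h4 i
      have hle3 : n i ^ 2 ≤ 3 := by omega
      have hb1 : -1 ≤ n i := by nlinarith [sq_nonneg (n i + 2)]
      have hb2 : n i ≤ 1 := by nlinarith [sq_nonneg (n i - 2)]
      nlinarith [hb1, hb2]
    have hexj : ∃ j, n j ^ 2 = 1 := by
      by_contra hc
      push_neg at hc
      have hz : ∀ i, n i ^ 2 = 0 := fun i => by
        have := h1 i; have := sq_nonneg (n i); have := hc i; omega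
      rw [Finset.sum_congr rfl fun i _ => hz i] at h
      simp at h
    obtain ⟨j, hj⟩ := hexj
    have hexk : ∃ k, k ≠ j ∧ n k ^ 2 = 1 := by
      by_contra hc
      push_neg at hc
      have htot := Finset.add_sum_erase Finset.univ (fun i => n i ^ 2) (Finset.mem_univ j)
      have hz : ∑ x ∈ Finset.univ.erase j, n x ^ 2 = 0 := by
        refine Finset.sum_eq_zero fun i hi => ?_
        have hij := Finset.ne_of_mem_erase hi
        have := h1 i; have := sq_nonneg (n i); have := hc i hij; omega
      simp only [hz] at htot; omega
    obtain ⟨k, hkj, hk⟩ := hexk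
    exact ⟨j, k, hkj.symm, hj, hk⟩

lemma half_class (c : Fin 8 → ℤ) (hodd : ∀ i, ∃ m : ℤ, c i = 2 * m + 1)
    (h : ∑ i, c i ^ 2 = 16) :
    ∃ j, c j ^ 2 = 9 ∧ ∀ i, i ≠ j → c i ^ 2 = 1 := by
  have h1 : ∀ i, 1 ≤ c i ^ 2 := by
    intro i
    obtain ⟨m, hm⟩ := hodd i
    have : c i ≤ -1 ∨ 1 ≤ c i := by omega
    rcases this with h' | h' <;> nlinarith
  have hle : ∀ i, c i ^ 2 ≤ 9 := by
    intro i
    have htot := Finset.add_sum_erase Finset.univ (fun i => c i ^ 2) (Finset.mem_univ i)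
    have hcard : (Finset.univ.erase i).card = 7 := by simp
    have h7 : 7 ≤ ∑ x ∈ Finset.univ.erase i, c x ^ 2 := by
      have := Finset.card_nsmul_le_sum (Finset.univ.erase i) (fun x => c x ^ 2) 1
        (fun x _ => h1 x)
      rw [hcard] at this
      simpa using this
    omega
  have hval : ∀ i, c i ^ 2 = 1 ∨ c i ^ 2 = 9 := by
    intro i
    obtain ⟨m, hm⟩ := hodd i
    have h1i := h1 i
    have hlei := hle i
    rw [hm] at h1i hlei
    have hm1 : -2 ≤ m := by nlinarith [sq_nonneg (2 * m + 6)]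
    have hm2 : m ≤ 1 := by nlinarith [sq_nonneg (2 * m - 4)]
    interval_cases m <;> rw [hm] <;> norm_num
  have hexj : ∃ j, c j ^ 2 = 9 := by
    by_contra hc
    push_neg at hc
    have : ∀ i, c i ^ 2 = 1 := fun i => (hval i).resolve_right (hc i)
    rw [Finset.sum_congr rfl fun i _ => this i] at h
    simp at h
  obtain ⟨j, hj⟩ := hexj
  refine ⟨j, hj, fun i hij => ?_⟩
  rcases hval i with h1' | h9
  · exact h1'
  exfalso
  have hpair : ∑ x ∈ ({j, i} : Finset (Fin 8)), c x ^ 2 = 18 := by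
    rw [Finset.sum_pair (Ne.symm hij)]
    omega
  have hsub : ∑ x ∈ ({j, i} : Finset (Fin 8)), c x ^ 2 ≤ ∑ x, c x ^ 2 :=
    Finset.sum_le_sum_of_subset_of_nonneg (Finset.subset_univ _)
      (fun x _ _ => sq_nonneg (c x))
  omega

/-- Every vector of norm 4 in the E8 lattice is a sum of two roots (norm-2 vectors). -/
theorem e8_norm_four_eq_sum_of_two_roots (v : Fin 8 → ℝ) (hv : inE8 v)
    (h4 : dot8 v v = 4) :
    ∃ a b : Fin 8 → ℝ, inE8 a ∧ inE8 b ∧ dot8 a a = 2 ∧ dot8 b b = 2 ∧ v = a + b := by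
  obtain ⟨hint_or, hm⟩ := hv
  rcases hint_or with hint | hhalf
  · -- integer coordinates
    choose n hn using hint
    have hsq : ∑ i, n i ^ 2 = 4 := by
      have hr : ((∑ i, n i ^ 2 : ℤ) : ℝ) = 4 := by
        push_cast
        rw [← h4, dot8]
        exact Finset.sum_congr rfl fun i _ => by rw [hn i]; ring
      exact_mod_cast hr
    rcases int_class n hsq with ⟨j, hj4, hrest⟩ | ⟨j, k, hjk, hj1, hk1⟩
    · -- one coordinate ±2
      set l : Fin 8 := if j = 0 then 1 else 0 with hl
      have hjl : j ≠ l := by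
        by_cases h0 : j = 0
        · rw [hl, if_pos h0, h0]; decide
        · rw [hl, if_neg h0]; exact h0
      have hnj : n j = 2 ∨ n j = -2 := by
        have hf : (n j - 2) * (n j + 2) = 0 := by linear_combination hj4
        rcases mul_eq_zero.mp hf with h' | h'
        · left; omega
        · right; omega
      have hvj : v j = 2 ∨ v j = -2 := by
        rcases hnj with h' | h'
        · left; rw [hn j, h']; norm_num
        · right; rw [hn j, h']; norm_num
      have hvl : v l = 0 := by
        rw [hn l, hrest l hjl.symm]; norm_num
      refine master v hm h4 j l hjl (v j / 2) 1 ?_ (Or.inl rfl) ?_ ?_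
      · rcases hvj with h' | h' <;> rw [h'] <;> norm_num
      · rcases hvj with h' | h' <;> rw [h', hvl] <;> norm_num
      · left
        intro i
        by_cases h1 : i = j
        · subst h1
          simp only [if_pos rfl]
          rcases hvj with h' | h'
          · exact ⟨1, by rw [h']; norm_num⟩
          · exact ⟨-1, by rw [h']; norm_num⟩
        · by_cases h2 : i = l
          · subst h2
            exact ⟨-1, by simp only [if_neg h1, if_pos rfl, hvl]; norm_num⟩
          · exact ⟨n i, by simp only [if_neg h1, if_neg h2, hn i]; ring⟩
    · -- four coordinates ±1
      have hvj : v j = 1 ∨ v j = -1 := by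
        have hf : (n j - 1) * (n j + 1) = 0 := by linear_combination hj1
        rcases mul_eq_zero.mp hf with h' | h'
        · left; have hv' : n j = 1 := by omega
          rw [hn j, hv']; norm_num
        · right; have hv' : n j = -1 := by omega
          rw [hn j, hv']; norm_num
      have hvk : v k = 1 ∨ v k = -1 := by
        have hf : (n k - 1) * (n k + 1) = 0 := by linear_combination hk1
        rcases mul_eq_zero.mp hf with h' | h'
        · left; have hv' : n k = 1 := by omega
          rw [hn k, hv']; norm_num
        · right; have hv' : n k = -1 := by omega
          rw [hn k, hv']; norm_num
      refine master v hm h4 j k hjk (v j) (v k) hvj hvk ?_ ?_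
      · rcases hvj with h' | h' <;> rcases hvk with h'' | h'' <;> rw [h', h''] <;> norm_num
      · left
        intro i
        by_cases h1 : i = j
        · exact ⟨0, by subst h1; simp only [if_pos rfl]; norm_num⟩
        · by_cases h2 : i = k
          · exact ⟨0, by subst h2; simp only [if_neg h1, if_pos rfl]; norm_num⟩
          · exact ⟨n i, by simp only [if_neg h1, if_neg h2, hn i]; ring⟩
  · -- half-integer coordinates
    choose n hn using hhalf
    set c : Fin 8 → ℤ := fun i => 2 * n i + 1 with hc
    have hcr : ∀ i, (c i : ℝ) = 2 * v i := by
      intro i; rw [hn i, hc]; push_cast; ring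
    have hsq : ∑ i, c i ^ 2 = 16 := by
      have hr : ((∑ i, c i ^ 2 : ℤ) : ℝ) = 16 := by
        push_cast
        have : ∀ i : Fin 8, ((c i : ℝ)) ^ 2 = 4 * (v i * v i) := by
          intro i; rw [hcr i]; ring
        rw [Finset.sum_congr rfl fun i _ => this i, ← Finset.mul_sum, ← dot8, h4]
        norm_num
      exact_mod_cast hr
    obtain ⟨j, hj9, hrest⟩ := half_class c (fun i => ⟨n i, rfl⟩) hsq
    set l : Fin 8 := if j = 0 then 1 else 0 with hl
    have hjl : j ≠ l := by
      by_cases h0 : j = 0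
      · rw [hl, if_pos h0, h0]; decide
      · rw [hl, if_neg h0]; exact h0
    have hvj : v j = 3 / 2 ∨ v j = -(3 / 2) := by
      have hf : (c j - 3) * (c j + 3) = 0 := by linear_combination hj9
      have h2v := hcr j
      rcases mul_eq_zero.mp hf with h' | h'
      · left; have : c j = 3 := by omega
        rw [this] at h2v; push_cast at h2v; linarith
      · right; have : c j = -3 := by omega
        rw [this] at h2v; push_cast at h2v; linarith
    have hvl : v l = 1 / 2 ∨ v l = -(1 / 2) := by
      have h1 := hrest l hjl.symm
      have hf : (c l - 1) * (c l + 1) = 0 := by linear_combination h1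
      have h2v := hcr l
      rcases mul_eq_zero.mp hf with h' | h'
      · left; have : c l = 1 := by omega
        rw [this] at h2v; push_cast at h2v; linarith
      · right; have : c l = -1 := by omega
        rw [this] at h2v; push_cast at h2v; linarith
    refine master v hm h4 j l hjl (2 / 3 * v j) (2 * v l) ?_ ?_ ?_ ?_
    · rcases hvj with h' | h' <;> rw [h'] <;> norm_num
    · rcases hvl with h' | h' <;> rw [h'] <;> norm_num
    · rcases hvj with h' | h' <;> rcases hvl with h'' | h'' <;> rw [h', h''] <;> norm_num
    · right
      intro i
      by_cases h1 : i = j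
      · subst h1
        simp only [if_pos rfl]
        rcases hvj with h' | h'
        · exact ⟨0, by rw [h']; norm_num⟩
        · exact ⟨-1, by rw [h']; norm_num⟩
      · by_cases h2 : i = l
        · subst h2
          simp only [if_neg h1, if_pos rfl]
          rcases hvl with h' | h'
          · exact ⟨-1, by rw [h']; norm_num⟩
          · exact ⟨0, by rw [h']; norm_num⟩
        · exact ⟨n i, by simp only [if_neg h1, if_neg h2, hn i]; ring⟩
end
end

section
/- The automorphism group of the E8 lattice acts transitively on the set of vectors of norm 2. -/
noncomputable section

namespace E8Aux

/-! ### Basic dot8 lemmas -/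

lemma dot8_comm (u v : Fin 8 → ℝ) : dot8 u v = dot8 v u := by
  simp [dot8, mul_comm]

lemma dot8_add_left (u v w : Fin 8 → ℝ) : dot8 (u + v) w = dot8 u w + dot8 v w := by
  simp [dot8, add_mul, Finset.sum_add_distrib]

lemma dot8_sub_left (u v w : Fin 8 → ℝ) : dot8 (u - v) w = dot8 u w - dot8 v w := by
  simp [dot8, sub_mul, Finset.sum_sub_distrib]

lemma dot8_smul_left (c : ℝ) (u w : Fin 8 → ℝ) : dot8 (c • u) w = c * dot8 u w := by
  simp [dot8, Finset.mul_sum, mul_assoc]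

lemma dot8_add_right (u v w : Fin 8 → ℝ) : dot8 w (u + v) = dot8 w u + dot8 w v := by
  rw [dot8_comm, dot8_add_left, dot8_comm u, dot8_comm v]

lemma dot8_sub_right (u v w : Fin 8 → ℝ) : dot8 w (u - v) = dot8 w u - dot8 w v := by
  rw [dot8_comm, dot8_sub_left, dot8_comm u, dot8_comm v]

lemma dot8_smul_right (c : ℝ) (u w : Fin 8 → ℝ) : dot8 w (c • u) = c * dot8 w u := by
  rw [dot8_comm, dot8_smul_left, dot8_comm]

lemma dot8_neg_left (u w : Fin 8 → ℝ) : dot8 (-u) w = - dot8 u w := by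
  simp [dot8, Finset.sum_neg_distrib]

lemma dot8_self_nonneg (u : Fin 8 → ℝ) : 0 ≤ dot8 u u :=
  Finset.sum_nonneg fun i _ => mul_self_nonneg _

lemma eq_zero_of_dot8_self (u : Fin 8 → ℝ) (h : dot8 u u = 0) : u = 0 := by
  funext i
  have h1 : ∀ j ∈ Finset.univ, (0:ℝ) ≤ u j * u j := fun j _ => mul_self_nonneg _
  have := (Finset.sum_eq_zero_iff_of_nonneg h1).1 h i (Finset.mem_univ i)
  have := mul_self_eq_zero.1 this
  simpa using this

/-! ### E8 closure lemmas -/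

lemma inE8_add {u v : Fin 8 → ℝ} (hu : inE8 u) (hv : inE8 v) : inE8 (u + v) := by
  obtain ⟨hut, mu, hmu⟩ := hu
  obtain ⟨hvt, mv, hmv⟩ := hv
  constructor
  · rcases hut with hu1 | hu1 <;> rcases hvt with hv1 | hv1
    · left; intro i
      obtain ⟨a, ha⟩ := hu1 i; obtain ⟨b, hb⟩ := hv1 i
      exact ⟨a + b, by push_cast [Pi.add_apply, ha, hb]; ring⟩
    · right; intro i
      obtain ⟨a, ha⟩ := hu1 i; obtain ⟨b, hb⟩ := hv1 i
      exact ⟨a + b, by push_cast [Pi.add_apply, ha, hb]; ring⟩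
    · right; intro i
      obtain ⟨a, ha⟩ := hu1 i; obtain ⟨b, hb⟩ := hv1 i
      exact ⟨a + b, by push_cast [Pi.add_apply, ha, hb]; ring⟩
    · left; intro i
      obtain ⟨a, ha⟩ := hu1 i; obtain ⟨b, hb⟩ := hv1 i
      exact ⟨a + b + 1, by push_cast [Pi.add_apply, ha, hb]; ring⟩
  · exact ⟨mu + mv, by
      push_cast
      rw [show (∑ i, (u + v) i) = (∑ i, u i) + (∑ i, v i) by
        simp [Finset.sum_add_distrib], hmu, hmv]; ring⟩

lemma inE8_neg {u : Fin 8 → ℝ} (hu : inE8 u) : inE8 (-u) := by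
  obtain ⟨hut, mu, hmu⟩ := hu
  constructor
  · rcases hut with hu1 | hu1
    · left; intro i
      obtain ⟨a, ha⟩ := hu1 i
      exact ⟨-a, by push_cast [Pi.neg_apply, ha]; ring⟩
    · right; intro i
      obtain ⟨a, ha⟩ := hu1 i
      exact ⟨-a - 1, by push_cast [Pi.neg_apply, ha]; ring⟩
  · exact ⟨-mu, by
      push_cast
      rw [show (∑ i, (-u) i) = -(∑ i, u i) by simp, hmu]; ring⟩

lemma inE8_zero : inE8 (0 : Fin 8 → ℝ) := by
  refine ⟨Or.inl fun i => ⟨0, by simp⟩, 0, by simp⟩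

lemma inE8_zsmul {u : Fin 8 → ℝ} (hu : inE8 u) (c : ℤ) : inE8 ((c:ℝ) • u) := by
  induction c using Int.induction_on with
  | zero => simpa using inE8_zero
  | succ k ih =>
      rw [show ((((k:ℕ):ℤ)+1:ℤ):ℝ) • u = ((((k:ℕ):ℤ)):ℝ) • u + u by push_cast; module]
      exact inE8_add ih hu
  | pred k ih =>
      rw [show (((-(k:ℕ)-1:ℤ)):ℝ) • u = (((-(k:ℕ):ℤ)):ℝ) • u + (-u) by push_cast; module]
      exact inE8_add ih (inE8_neg hu)

lemma inE8_sub {u v : Fin 8 → ℝ} (hu : inE8 u) (hv : inE8 v) : inE8 (u - v) := by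
  rw [sub_eq_add_neg]; exact inE8_add hu (inE8_neg hv)

/-- The inner product of two E8 lattice vectors is an integer. -/
lemma dot8_int {u v : Fin 8 → ℝ} (hu : inE8 u) (hv : inE8 v) : ∃ n : ℤ, dot8 u v = n := by
  obtain ⟨hut, mu, hmu⟩ := hu
  obtain ⟨hvt, mv, hmv⟩ := hv
  rcases hut with hu1 | hu1 <;> rcases hvt with hv1 | hv1
  · -- both integer
    choose a ha using hu1; choose b hb using hv1
    exact ⟨∑ i, a i * b i, by simp [dot8, ha, hb]⟩
  · -- u int, v half
    choose a ha using hu1; choose b hb using hv1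
    refine ⟨∑ i, a i * b i + mu, ?_⟩
    have h1 : dot8 u v = (∑ i, (a i : ℝ) * (b i)) + (∑ i, u i) / 2 := by
      simp only [dot8, ha, hb]
      rw [Finset.sum_div, ← Finset.sum_add_distrib]
      congr 1; funext i; push_cast; ring
    rw [h1, hmu]; push_cast; ring
  · -- u half, v int
    choose a ha using hu1; choose b hb using hv1
    refine ⟨∑ i, a i * b i + mv, ?_⟩
    have h1 : dot8 u v = (∑ i, (a i : ℝ) * (b i)) + (∑ i, v i) / 2 := by
      simp only [dot8, ha, hb]
      rw [Finset.sum_div, ← Finset.sum_add_distrib]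
      congr 1; funext i; push_cast; ring
    rw [h1, hmv]; push_cast; ring
  · -- both half
    choose a ha using hu1; choose b hb using hv1
    have hsa : (∑ i, (a i : ℝ)) = 2 * mu - 4 := by
      have : (∑ i, u i) = (∑ i, (a i : ℝ)) + 4 := by
        simp only [ha]
        rw [Finset.sum_add_distrib]; norm_num
      rw [this] at hmu; linarith
    have hsb : (∑ i, (b i : ℝ)) = 2 * mv - 4 := by
      have : (∑ i, v i) = (∑ i, (b i : ℝ)) + 4 := by
        simp only [hb]
        rw [Finset.sum_add_distrib]; norm_num
      rw [this] at hmv; linarith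
    refine ⟨∑ i, a i * b i + (mu - 2) + (mv - 2) + 2, ?_⟩
    have h1 : dot8 u v =
        (∑ i, (a i : ℝ) * (b i)) + (∑ i, (a i:ℝ))/2 + (∑ i, (b i:ℝ))/2 + 2 := by
      simp only [dot8, ha, hb]
      rw [Finset.sum_div, Finset.sum_div, ← Finset.sum_add_distrib, ← Finset.sum_add_distrib]
      have : ∀ i : Fin 8, ((a i:ℝ) + 1/2) * ((b i:ℝ) + 1/2)
          = ((a i:ℝ) * (b i:ℝ) + (a i:ℝ)/2 + (b i:ℝ)/2) + 1/4 := by intro i; ring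
      simp only [this]
      rw [Finset.sum_add_distrib]; norm_num
    rw [h1, hsa, hsb]; push_cast; ring

/-- The equivalence relation: existence of an automorphism carrying u to v. -/
def E8Rel (u v : Fin 8 → ℝ) : Prop :=
  ∃ f : (Fin 8 → ℝ) ≃ₗ[ℝ] (Fin 8 → ℝ),
    (∀ x y, dot8 (f x) (f y) = dot8 x y) ∧
    (∀ x, inE8 (f x) ↔ inE8 x) ∧
    f u = v

lemma e8rel_refl (u : Fin 8 → ℝ) : E8Rel u u :=
  ⟨LinearEquiv.refl ℝ _, fun _ _ => rfl, fun _ => Iff.rfl, rfl⟩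

lemma E8Rel.trans {u v w : Fin 8 → ℝ} (h1 : E8Rel u v) (h2 : E8Rel v w) : E8Rel u w := by
  obtain ⟨f, hf1, hf2, hf3⟩ := h1
  obtain ⟨g, hg1, hg2, hg3⟩ := h2
  exact ⟨f.trans g, fun x y => by simp [hg1, hf1],
    fun x => by simp only [LinearEquiv.trans_apply]; rw [hg2, hf2],
    by simp [LinearEquiv.trans_apply, hf3, hg3]⟩

lemma E8Rel.symm {u v : Fin 8 → ℝ} (h : E8Rel u v) : E8Rel v u := by
  obtain ⟨f, hf1, hf2, hf3⟩ := h
  refine ⟨f.symm, fun x y => ?_, fun x => ?_, ?_⟩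
  · have := hf1 (f.symm x) (f.symm y); simpa using this.symm
  · have := hf2 (f.symm x); simpa using this.symm
  · rw [← hf3]; simp

/-! ### Reflections -/

/-- Reflection in a root `r` as a linear map. -/
def reflLM (r : Fin 8 → ℝ) : (Fin 8 → ℝ) →ₗ[ℝ] (Fin 8 → ℝ) where
  toFun x := x - (dot8 x r) • r
  map_add' x y := by
    simp only [dot8_add_left, add_smul]
    abel
  map_smul' c x := by
    simp only [dot8_smul_left, RingHom.id_apply, smul_smul, smul_sub]

lemma reflLM_invol (r : Fin 8 → ℝ) (hr2 : dot8 r r = 2) (x : Fin 8 → ℝ) :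
    reflLM r (reflLM r x) = x := by
  show (x - dot8 x r • r) - dot8 (x - dot8 x r • r) r • r = x
  rw [dot8_sub_left, dot8_smul_left, hr2]
  module

/-- Reflection in a root `r` as a linear equivalence. -/
def reflE (r : Fin 8 → ℝ) (hr2 : dot8 r r = 2) : (Fin 8 → ℝ) ≃ₗ[ℝ] (Fin 8 → ℝ) :=
  { reflLM r with
    invFun := reflLM r
    left_inv := reflLM_invol r hr2
    right_inv := reflLM_invol r hr2 }

lemma reflE_apply (r : Fin 8 → ℝ) (hr2 : dot8 r r = 2) (x : Fin 8 → ℝ) :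
    reflE r hr2 x = x - (dot8 x r) • r := rfl

lemma reflE_dot (r : Fin 8 → ℝ) (hr2 : dot8 r r = 2) (x y : Fin 8 → ℝ) :
    dot8 (reflE r hr2 x) (reflE r hr2 y) = dot8 x y := by
  rw [reflE_apply, reflE_apply, dot8_sub_left, dot8_sub_right, dot8_sub_right,
    dot8_smul_left, dot8_smul_right, dot8_smul_right, dot8_smul_left, hr2,
    dot8_comm r y]
  ring

lemma reflE_inE8 (r : Fin 8 → ℝ) (hr : inE8 r) (hr2 : dot8 r r = 2) (x : Fin 8 → ℝ) :
    inE8 (reflE r hr2 x) ↔ inE8 x := by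
  constructor
  · intro h
    have := reflLM_invol r hr2 x
    have h2 : inE8 (reflE r hr2 (reflE r hr2 x)) → inE8 x := by
      rw [show reflE r hr2 (reflE r hr2 x) = x from reflLM_invol r hr2 x]; exact id
    apply h2
    -- so it suffices: inE8 y → inE8 (reflE r y)
    obtain ⟨n, hn⟩ := dot8_int h hr
    rw [reflE_apply, hn]
    exact inE8_sub h (inE8_zsmul hr n)
  · intro h
    obtain ⟨n, hn⟩ := dot8_int h hr
    rw [reflE_apply, hn]
    exact inE8_sub h (inE8_zsmul hr n)

/-- Reflecting in a root gives an E8-relation. -/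
lemma E8Rel.reflect {r : Fin 8 → ℝ} (hr : inE8 r) (hr2 : dot8 r r = 2) (x : Fin 8 → ℝ) :
    E8Rel x (x - (dot8 x r) • r) :=
  ⟨reflE r hr2, reflE_dot r hr2, reflE_inE8 r hr hr2, rfl⟩

/-! ### The nonorthogonal case -/

lemma rel_of_dot_ne_zero {u v : Fin 8 → ℝ} (hu : inE8 u) (hv : inE8 v)
    (hu2 : dot8 u u = 2) (hv2 : dot8 v v = 2) (hne : dot8 u v ≠ 0) : E8Rel u v := by
  obtain ⟨c, hc⟩ := dot8_int hu hv
  have hcs : (dot8 u v)^2 ≤ 4 := by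
    have := Finset.sum_mul_sq_le_sq_mul_sq Finset.univ u v
    have e1 : (∑ i, u i ^ 2) = dot8 u u := by simp [dot8, sq]
    have e2 : (∑ i, v i ^ 2) = dot8 v v := by simp [dot8, sq]
    calc (dot8 u v)^2 = (∑ i, u i * v i)^2 := rfl
      _ ≤ (∑ i, u i ^ 2) * (∑ i, v i ^ 2) := this
      _ = 4 := by rw [e1, e2, hu2, hv2]; norm_num
  have hc4 : c^2 ≤ 4 := by
    have : ((c:ℝ))^2 ≤ 4 := by rw [← hc]; exact hcs
    exact_mod_cast this
  have hcb1 : -2 ≤ c := by nlinarith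
  have hcb2 : c ≤ 2 := by nlinarith
  have hc0 : c ≠ 0 := by rintro rfl; simp at hc; exact hne hc
  interval_cases c
  · -- c = -2 : u = -v
    have huv : u + v = 0 := by
      apply eq_zero_of_dot8_self
      rw [dot8_add_left, dot8_add_right, dot8_add_right, hu2, hv2, dot8_comm v u, hc]
      push_cast; ring
    have huveq : u = -v := by linear_combination (norm := module) huv
    have := E8Rel.reflect hv hv2 u
    rw [hc] at this
    convert this using 1
    rw [huveq]; push_cast; module
  · -- c = -1 : two reflections
    have hr : inE8 (u + v) := inE8_add hu hv
    have hr2 : dot8 (u+v) (u+v) = 2 := by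
      rw [dot8_add_left, dot8_add_right, dot8_add_right, hu2, hv2, dot8_comm v u, hc]
      push_cast; ring
    have h1 : E8Rel u (-v) := by
      have := E8Rel.reflect hr hr2 u
      have hd : dot8 u (u + v) = 1 := by rw [dot8_add_right, hu2, hc]; push_cast; ring
      rw [hd] at this
      convert this using 1
      module
    have h2 : E8Rel (-v) v := by
      have := E8Rel.reflect hv hv2 (-v)
      have hd : dot8 (-v) v = -2 := by rw [dot8_neg_left, hv2]
      rw [hd] at this
      convert this using 1
      module
    exact h1.trans h2
  · exact absurd (by exact_mod_cast hc) hne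
  · -- c = 1 : reflect in u - v
    have hr : inE8 (u - v) := inE8_sub hu hv
    have hr2 : dot8 (u-v) (u-v) = 2 := by
      rw [dot8_sub_left, dot8_sub_right, dot8_sub_right, hu2, hv2, dot8_comm v u, hc]
      push_cast; ring
    have := E8Rel.reflect hr hr2 u
    have hd : dot8 u (u - v) = 1 := by rw [dot8_sub_right, hu2, hc]; push_cast; ring
    rw [hd] at this
    convert this using 1
    module
  · -- c = 2 : u = v
    have huv : u - v = 0 := by
      apply eq_zero_of_dot8_self
      rw [dot8_sub_left, dot8_sub_right, dot8_sub_right, hu2, hv2, dot8_comm v u, hc]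
      push_cast; ring
    have : u = v := by linear_combination (norm := module) huv
    rw [this]; exact e8rel_refl v


/-! ### Vectors supported on two coordinates -/

def twoVec (i j : Fin 8) (A B : ℝ) : Fin 8 → ℝ :=
  fun k => if k = i then A else if k = j then B else 0

lemma twoVec_at_i (i j : Fin 8) (A B : ℝ) : twoVec i j A B i = A := by simp [twoVec]

lemma twoVec_at_j {i j : Fin 8} (hij : i ≠ j) (A B : ℝ) : twoVec i j A B j = B := by
  simp [twoVec, hij.symm]

lemma twoVec_at_other {i j k : Fin 8} (hki : k ≠ i) (hkj : k ≠ j) (A B : ℝ) :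
    twoVec i j A B k = 0 := by simp [twoVec, hki, hkj]

lemma sum_support_pair {f : Fin 8 → ℝ} {i j : Fin 8} (hij : i ≠ j)
    (h0 : ∀ k, k ≠ i → k ≠ j → f k = 0) : ∑ k, f k = f i + f j := by
  rw [← Finset.sum_subset (Finset.subset_univ ({i, j} : Finset (Fin 8)))
    (fun k _ hk => by
      simp only [Finset.mem_insert, Finset.mem_singleton, not_or] at hk
      exact h0 k hk.1 hk.2)]
  exact Finset.sum_pair hij

lemma dot8_twoVec {i j : Fin 8} (hij : i ≠ j) (A B : ℝ) (x : Fin 8 → ℝ) :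
    dot8 x (twoVec i j A B) = x i * A + x j * B := by
  have h := sum_support_pair (f := fun k => x k * twoVec i j A B k) hij
    (fun k hki hkj => by
      show x k * twoVec i j A B k = 0
      rw [twoVec_at_other hki hkj A B]
      ring)
  simp only [twoVec_at_i, twoVec_at_j hij] at h
  exact h

lemma dot8_eq_two_terms {u : Fin 8 → ℝ} {i j : Fin 8} (hij : i ≠ j)
    (h0 : ∀ k, k ≠ i → k ≠ j → u k = 0) (x : Fin 8 → ℝ) :
    dot8 u x = u i * x i + u j * x j :=
  sum_support_pair (f := fun k => u k * x k) hij fun k hki hkj => by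
    show u k * x k = 0
    rw [h0 k hki hkj]
    ring

lemma twoVec_root {i j : Fin 8} (hij : i ≠ j) {A B : ℝ}
    (hA : A = 1 ∨ A = -1) (hB : B = 1 ∨ B = -1) :
    inE8 (twoVec i j A B) ∧ dot8 (twoVec i j A B) (twoVec i j A B) = 2 := by
  refine ⟨⟨Or.inl fun k => ?_, ?_⟩, ?_⟩
  · by_cases hki : k = i
    · subst hki
      rcases hA with h | h
      · exact ⟨1, by rw [twoVec_at_i, h]; norm_num⟩
      · exact ⟨-1, by rw [twoVec_at_i, h]; norm_num⟩
    · by_cases hkj : k = j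
      · subst hkj
        rcases hB with h | h
        · exact ⟨1, by rw [twoVec_at_j hij, h]; norm_num⟩
        · exact ⟨-1, by rw [twoVec_at_j hij, h]; norm_num⟩
      · exact ⟨0, by rw [twoVec_at_other hki hkj A B]; norm_num⟩
  · have hs : ∑ k, twoVec i j A B k = A + B := by
      have h := sum_support_pair (f := twoVec i j A B) hij
        (fun k hki hkj => twoVec_at_other hki hkj A B)
      rwa [twoVec_at_i, twoVec_at_j hij] at h
    rcases hA with h | h <;> rcases hB with h' | h'
    · exact ⟨1, by rw [hs, h, h']; norm_num⟩
    · exact ⟨0, by rw [hs, h, h']; norm_num⟩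
    · exact ⟨0, by rw [hs, h, h']; norm_num⟩
    · exact ⟨-1, by rw [hs, h, h']; norm_num⟩
  · rw [dot8_twoVec hij, twoVec_at_i, twoVec_at_j hij]
    rcases hA with h | h <;> rcases hB with h' | h' <;> rw [h, h'] <;> norm_num

/-! ### Classification of roots -/

/-- Coordinates of a half-type root are all `±1/2`. -/
lemma half_root_coords {v : Fin 8 → ℝ} (hv1 : ∀ i, ∃ n : ℤ, v i = (n : ℝ) + 1 / 2)
    (hv2 : dot8 v v = 2) : ∀ i, v i = 1/2 ∨ v i = -(1/2) := by
  have hge : ∀ i : Fin 8, (0:ℝ) ≤ v i * v i - 1/4 := by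
    intro i
    obtain ⟨n, hn⟩ := hv1 i
    have hnn : (0:ℝ) ≤ (n:ℝ) * ((n:ℝ) + 1) := by
      have : (0:ℤ) ≤ n * (n + 1) := by
        rcases le_or_gt 0 n with h | h
        · positivity
        · have h1 : (0:ℤ) ≤ (-n) * (-(n+1)) :=
            mul_nonneg (by omega) (by omega)
          nlinarith
      exact_mod_cast this
    rw [hn]; nlinarith
  have hsum : ∑ i, (v i * v i - 1/4) = 0 := by
    rw [Finset.sum_sub_distrib]
    have : (dot8 v v) = ∑ i, v i * v i := rfl
    rw [← this, hv2]; norm_num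
  have hall := (Finset.sum_eq_zero_iff_of_nonneg (fun i _ => hge i)).1 hsum
  intro i
  have h := hall i (Finset.mem_univ i)
  have h4 : v i * v i = 1/4 := by linarith
  have : (v i - 1/2) * (v i + 1/2) = 0 := by nlinarith
  rcases mul_eq_zero.1 this with h | h
  · left; linarith
  · right; linarith

/-- An integer-type root has exactly two nonzero coordinates, each `±1`. -/
lemma int_root_coords {u : Fin 8 → ℝ} (hu1 : ∀ i, ∃ n : ℤ, u i = (n : ℝ))
    (hu2 : dot8 u u = 2) :
    ∃ i j : Fin 8, i ≠ j ∧ (u i = 1 ∨ u i = -1) ∧ (u j = 1 ∨ u j = -1) ∧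
      ∀ k, k ≠ i → k ≠ j → u k = 0 := by
  have hsq : ∀ i : Fin 8, u i * u i ≤ 2 := by
    intro i
    have h1 : ∀ j ∈ Finset.univ, (0:ℝ) ≤ u j * u j := fun j _ => mul_self_nonneg _
    have := Finset.single_le_sum h1 (Finset.mem_univ i)
    rw [show (∑ j, u j * u j) = dot8 u u from rfl, hu2] at this
    exact this
  have hval : ∀ i : Fin 8, u i = 0 ∨ u i = 1 ∨ u i = -1 := by
    intro i
    obtain ⟨n, hn⟩ := hu1 i
    have h2 : (n:ℝ) * n ≤ 2 := by rw [← hn]; exact hsq i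
    have h2' : n * n ≤ 2 := by exact_mod_cast h2
    have hb1 : -1 ≤ n := by nlinarith
    have hb2 : n ≤ 1 := by nlinarith
    interval_cases n <;> simp [hn]
  set S : Finset (Fin 8) := Finset.univ.filter (fun i => u i ≠ 0) with hS
  have hcardR : (S.card : ℝ) = 2 := by
    have h1 : ∑ i ∈ S, u i * u i = ∑ i, u i * u i :=
      Finset.sum_filter_of_ne (fun i _ h => by intro h0; rw [h0] at h; simp at h)
    have h2 : ∑ i ∈ S, u i * u i = ∑ i ∈ S, 1 := by
      apply Finset.sum_congr rfl
      intro i hi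
      rw [hS, Finset.mem_filter] at hi
      rcases hval i with h | h | h
      · exact absurd h hi.2
      · rw [h]; norm_num
      · rw [h]; norm_num
    have h3 : (∑ i ∈ S, (1:ℝ)) = S.card := by simp
    rw [← h3, ← h2, h1, show (∑ i, u i * u i) = dot8 u u from rfl, hu2]
  have hcard : S.card = 2 := by exact_mod_cast hcardR
  obtain ⟨i, j, hij, hSij⟩ := Finset.card_eq_two.1 hcard
  have hiS : i ∈ S := by rw [hSij]; simp
  have hjS : j ∈ S := by rw [hSij]; simp
  have hine : u i ≠ 0 := (Finset.mem_filter.1 hiS).2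
  have hjne : u j ≠ 0 := (Finset.mem_filter.1 hjS).2
  refine ⟨i, j, hij, ?_, ?_, ?_⟩
  · rcases hval i with h | h | h
    · exact absurd h hine
    · exact Or.inl h
    · exact Or.inr h
  · rcases hval j with h | h | h
    · exact absurd h hjne
    · exact Or.inl h
    · exact Or.inr h
  · intro k hki hkj
    by_contra hk
    have : k ∈ S := Finset.mem_filter.2 ⟨Finset.mem_univ k, hk⟩
    rw [hSij] at this
    simp only [Finset.mem_insert, Finset.mem_singleton] at this
    tauto

lemma exists_third (i j : Fin 8) : ∃ k : Fin 8, k ≠ i ∧ k ≠ j := by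
  revert i j; decide


/-! ### Bridge roots for orthogonal pairs -/

lemma bridge_int_half {u v : Fin 8 → ℝ} (hu1 : ∀ i, ∃ n : ℤ, u i = (n:ℝ))
    (hu2 : dot8 u u = 2) (hv1 : ∀ i, ∃ n : ℤ, v i = (n:ℝ) + 1/2) (hv2 : dot8 v v = 2) :
    ∃ w, inE8 w ∧ dot8 w w = 2 ∧ dot8 u w ≠ 0 ∧ dot8 v w ≠ 0 := by
  obtain ⟨i, j, hij, hui, huj, hu0⟩ := int_root_coords hu1 hu2
  have hvc := half_root_coords hv1 hv2
  obtain ⟨k, hki, hkj⟩ := exists_third i j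
  have hik : i ≠ k := hki.symm
  have hBval : (4 * v k) * (u i * v i) = 1 ∨ (4 * v k) * (u i * v i) = -1 := by
    rcases hvc k with h | h <;> rcases hvc i with h' | h' <;> rcases hui with h'' | h'' <;>
      rw [h, h', h''] <;> norm_num
  obtain ⟨hwE, hw2⟩ := twoVec_root hik hui hBval
  refine ⟨twoVec i k (u i) ((4 * v k) * (u i * v i)), hwE, hw2, ?_, ?_⟩
  · rw [dot8_eq_two_terms hij hu0, twoVec_at_i,
      twoVec_at_other hij.symm hkj.symm (u i) ((4 * v k) * (u i * v i))]
    rcases hui with h | h <;> rw [h] <;> norm_num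
  · rw [dot8_twoVec hik]
    rcases hvc k with h | h <;> rcases hvc i with h' | h' <;> rcases hui with h'' | h'' <;>
      rw [h, h', h''] <;> norm_num

lemma bridge_int_int {u v : Fin 8 → ℝ} (hu1 : ∀ i, ∃ n : ℤ, u i = (n:ℝ))
    (hu2 : dot8 u u = 2) (hv1 : ∀ i, ∃ n : ℤ, v i = (n:ℝ))
    (hv2 : dot8 v v = 2) (horth : dot8 u v = 0) :
    ∃ w, inE8 w ∧ dot8 w w = 2 ∧ dot8 u w ≠ 0 ∧ dot8 v w ≠ 0 := by
  obtain ⟨i, j, hij, hui, huj, hu0⟩ := int_root_coords hu1 hu2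
  obtain ⟨p, q, hpq, hvp, hvq, hv0⟩ := int_root_coords hv1 hv2
  have hui0 : u i ≠ 0 := by rcases hui with h | h <;> rw [h] <;> norm_num
  have huj0 : u j ≠ 0 := by rcases huj with h | h <;> rw [h] <;> norm_num
  have hvp0 : v p ≠ 0 := by rcases hvp with h | h <;> rw [h] <;> norm_num
  have hvq0 : v q ≠ 0 := by rcases hvq with h | h <;> rw [h] <;> norm_num
  have horth' : u i * v i + u j * v j = 0 := by
    rw [← dot8_eq_two_terms hij hu0]; exact horth
  by_cases hvi : v i = 0
  · by_cases hvj : v j = 0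
    · -- disjoint supports
      have hpi : p ≠ i := fun h => hvp0 (h ▸ hvi)
      have hpj : p ≠ j := fun h => hvp0 (h ▸ hvj)
      have hip : i ≠ p := hpi.symm
      obtain ⟨hwE, hw2⟩ := twoVec_root hip hui hvp
      refine ⟨twoVec i p (u i) (v p), hwE, hw2, ?_, ?_⟩
      · rw [dot8_eq_two_terms hij hu0, twoVec_at_i,
          twoVec_at_other hij.symm hpj.symm (u i) (v p)]
        rcases hui with h | h <;> rw [h] <;> norm_num
      · have hqi : q ≠ i := fun h => hvq0 (h ▸ hvi)
        rw [dot8_eq_two_terms hpq hv0, twoVec_at_j hip,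
          twoVec_at_other hqi hpq.symm (u i) (v p)]
        rcases hvp with h | h <;> rw [h] <;> norm_num
    · -- v i = 0 but v j ≠ 0 : impossible
      exfalso
      rw [hvi, mul_zero, zero_add] at horth'
      rcases mul_eq_zero.1 horth' with h | h
      · exact huj0 h
      · exact hvj h
  · -- v i ≠ 0 : supports are equal
    have hvj : v j ≠ 0 := by
      intro h
      rw [h, mul_zero, add_zero] at horth'
      rcases mul_eq_zero.1 horth' with h' | h'
      · exact hui0 h'
      · exact hvi h'
    have hipq : i = p ∨ i = q := by
      by_contra h; push_neg at h; exact hvi (hv0 i h.1 h.2)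
    have hjpq : j = p ∨ j = q := by
      by_contra h; push_neg at h; exact hvj (hv0 j h.1 h.2)
    have hpij : p = i ∨ p = j := by
      rcases hipq with h | h
      · exact Or.inl h.symm
      · rcases hjpq with h2 | h2
        · exact Or.inr h2.symm
        · exact absurd (h.trans h2.symm) hij
    have hqij : q = i ∨ q = j := by
      rcases hipq with h | h
      · rcases hjpq with h2 | h2
        · exact absurd (h.trans h2.symm) hij
        · exact Or.inr h2.symm
      · exact Or.inl h.symm
    have hv0' : ∀ m, m ≠ i → m ≠ j → v m = 0 := by
      intro m hmi hmj
      exact hv0 m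
        (by rcases hpij with h | h <;> rw [h] <;> assumption)
        (by rcases hqij with h | h <;> rw [h] <;> assumption)
    obtain ⟨k, hki, hkj⟩ := exists_third i j
    have hik : i ≠ k := hki.symm
    obtain ⟨hwE, hw2⟩ := twoVec_root hik hui (Or.inl rfl)
    refine ⟨twoVec i k (u i) 1, hwE, hw2, ?_, ?_⟩
    · rw [dot8_eq_two_terms hij hu0, twoVec_at_i,
        twoVec_at_other hij.symm hkj.symm (u i) 1]
      rcases hui with h | h <;> rw [h] <;> norm_num
    · rw [dot8_eq_two_terms hij hv0', twoVec_at_i,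
        twoVec_at_other hij.symm hkj.symm (u i) 1]
      simpa using mul_ne_zero hvi hui0

lemma bridge_half_half {u v : Fin 8 → ℝ} (hu1 : ∀ i, ∃ n : ℤ, u i = (n:ℝ) + 1/2)
    (hu2 : dot8 u u = 2) (hv1 : ∀ i, ∃ n : ℤ, v i = (n:ℝ) + 1/2)
    (hv2 : dot8 v v = 2) (horth : dot8 u v = 0) :
    ∃ w, inE8 w ∧ dot8 w w = 2 ∧ dot8 u w ≠ 0 ∧ dot8 v w ≠ 0 := by
  classical
  have huc := half_root_coords hu1 hu2
  have hvc := half_root_coords hv1 hv2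
  have hterm : ∀ i, u i * v i = 1/4 ∨ u i * v i = -(1/4) := by
    intro i
    rcases huc i with h | h <;> rcases hvc i with h' | h' <;> rw [h, h'] <;> norm_num
  set S := Finset.univ.filter (fun i : Fin 8 => u i * v i = 1/4) with hS
  set T := Finset.univ.filter (fun i : Fin 8 => ¬ (u i * v i = 1/4)) with hT
  have hsplit : (∑ i ∈ S, u i * v i) + (∑ i ∈ T, u i * v i) = ∑ i, u i * v i :=
    Finset.sum_filter_add_sum_filter_not Finset.univ _ _
  have hSsum : (∑ i ∈ S, u i * v i) = (S.card : ℝ) * (1/4) := by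
    have h1 : ∀ i ∈ S, u i * v i = (1/4 : ℝ) := fun i hi => (Finset.mem_filter.1 hi).2
    rw [Finset.sum_congr rfl h1, Finset.sum_const]
    simp [mul_comm]
  have hTsum : (∑ i ∈ T, u i * v i) = (T.card : ℝ) * (-(1/4)) := by
    have h1 : ∀ i ∈ T, u i * v i = (-(1/4) : ℝ) := by
      intro i hi
      rcases hterm i with h | h
      · exact absurd h (Finset.mem_filter.1 hi).2
      · exact h
    rw [Finset.sum_congr rfl h1, Finset.sum_const]
    simp [mul_comm]
  have hcards : S.card + T.card = 8 := by
    have h := Finset.card_filter_add_card_filter_not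
      (s := (Finset.univ : Finset (Fin 8))) (p := fun i => u i * v i = 1/4)
    simpa [hS, hT] using h
  have hdot : (∑ i, u i * v i) = 0 := horth
  have hSR : (S.card : ℝ) = (T.card : ℝ) := by
    rw [hSsum, hTsum, hdot] at hsplit
    linarith
  have hST : S.card = T.card := by exact_mod_cast hSR
  have h1lt : 1 < S.card := by omega
  obtain ⟨i, hiS, j, hjS, hij⟩ := Finset.one_lt_card.1 h1lt
  have hi : u i * v i = 1/4 := (Finset.mem_filter.1 hiS).2
  have hj : u j * v j = 1/4 := (Finset.mem_filter.1 hjS).2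
  have hA : 2 * u i = 1 ∨ 2 * u i = -1 := by
    rcases huc i with h | h <;> rw [h] <;> norm_num
  have hB : 2 * u j = 1 ∨ 2 * u j = -1 := by
    rcases huc j with h | h <;> rw [h] <;> norm_num
  obtain ⟨hwE, hw2⟩ := twoVec_root hij hA hB
  refine ⟨twoVec i j (2 * u i) (2 * u j), hwE, hw2, ?_, ?_⟩
  · rw [dot8_twoVec hij]
    rcases huc i with h | h <;> rcases huc j with h' | h' <;> rw [h, h'] <;> norm_num
  · rw [dot8_twoVec hij]
    have e : v i * (2 * u i) + v j * (2 * u j)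
        = 2 * (u i * v i) + 2 * (u j * v j) := by ring
    rw [e, hi, hj]; norm_num

lemma exists_bridge {u v : Fin 8 → ℝ} (hu : inE8 u) (hv : inE8 v)
    (hu2 : dot8 u u = 2) (hv2 : dot8 v v = 2) (horth : dot8 u v = 0) :
    ∃ w, inE8 w ∧ dot8 w w = 2 ∧ dot8 u w ≠ 0 ∧ dot8 v w ≠ 0 := by
  rcases hu.1 with hu1 | hu1 <;> rcases hv.1 with hv1 | hv1
  · exact bridge_int_int hu1 hu2 hv1 hv2 horth
  · exact bridge_int_half hu1 hu2 hv1 hv2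
  · obtain ⟨w, h1, h2, h3, h4⟩ := bridge_int_half hv1 hv2 hu1 hu2
    exact ⟨w, h1, h2, h4, h3⟩
  · exact bridge_half_half hu1 hu2 hv1 hv2 horth

end E8Aux

/-- Aut(E8) acts transitively on the set of vectors of norm 2. -/
theorem e8_aut_transitive_on_roots (u v : Fin 8 → ℝ)
    (hu : inE8 u) (hv : inE8 v) (hu2 : dot8 u u = 2) (hv2 : dot8 v v = 2) :
    ∃ f : (Fin 8 → ℝ) ≃ₗ[ℝ] (Fin 8 → ℝ),
      (∀ x y, dot8 (f x) (f y) = dot8 x y) ∧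
      (∀ x, inE8 (f x) ↔ inE8 x) ∧
      f u = v := by
  have main : E8Aux.E8Rel u v := by
    by_cases h : dot8 u v = 0
    · obtain ⟨w, hw, hw2, h1, h2⟩ := E8Aux.exists_bridge hu hv hu2 hv2 h
      exact (E8Aux.rel_of_dot_ne_zero hu hw hu2 hw2 h1).trans
        (E8Aux.rel_of_dot_ne_zero hv hw hv2 hw2 h2).symm
    · exact E8Aux.rel_of_dot_ne_zero hu hv hu2 hv2 h
  exact main
end
end

section
/- Every nonzero equivalence class in E8/2E8 contains a vector of norm 2 or a vector of norm 4. -/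
noncomputable section

open Finset

/-- Uniform parity for integer vectors. -/
def Uni (d : Fin 8 → ℤ) : Prop := (∀ i, d i % 2 = 0) ∨ (∀ i, d i % 2 = 1)

/-- Conclusion of the integer core lemma. -/
def CoreGoal (c : Fin 8 → ℤ) : Prop :=
  ∃ e : Fin 8 → ℤ, Uni e ∧ ((4:ℤ) ∣ ∑ i, e i) ∧
      ((∑ i, (e i)^2 = 8) ∨ (∑ i, (e i)^2 = 16)) ∧
      ∃ d : Fin 8 → ℤ, Uni d ∧ ((4:ℤ) ∣ ∑ i, d i) ∧ ∀ i, c i - e i = 2 * d i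

lemma sum_ind (P : Fin 8 → Prop) [DecidablePred P] (a : ℤ) :
    ∑ i, (if P i then a else 0) = ((univ.filter P).card : ℤ) * a := by
  rw [Finset.sum_ite, Finset.sum_const, Finset.sum_const]
  simp [mul_comm]

lemma two_mul_sum_div (c e : Fin 8 → ℤ) (h : ∀ i, 2 ∣ (c i - e i)) :
    2 * (∑ i, (c i - e i) / 2) = (∑ i, c i) - (∑ i, e i) := by
  rw [Finset.mul_sum, ← Finset.sum_sub_distrib]
  exact Finset.sum_congr rfl fun i _ => (Int.mul_ediv_cancel' (h i))

lemma core_k08 (c n : Fin 8 → ℤ) (hn : ∀ i, c i = 2 * n i) (hUn : Uni n)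
    (hsn : (2:ℤ) ∣ ∑ i, n i)
    (hnz : ¬ ∃ d : Fin 8 → ℤ, Uni d ∧ ((4:ℤ) ∣ ∑ i, d i) ∧ ∀ i, c i = 2 * d i) :
    CoreGoal c := by
  by_cases h4 : (4:ℤ) ∣ ∑ i, n i
  · exact absurd ⟨n, hUn, h4, hn⟩ hnz
  · refine ⟨fun i => if i = 0 then 4 else 0, ?_, ?_, ?_, ?_⟩
    · left; intro i; dsimp only; split_ifs <;> decide
    · simp
    · right
      rw [show (fun i => (if i = (0:Fin 8) then (4:ℤ) else 0)^2) =
          fun i => (if i = (0:Fin 8) then (16:ℤ) else 0) from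
        funext fun i => by split_ifs <;> norm_num]
      simp
    · refine ⟨fun i => n i - (if i = 0 then 2 else 0), ?_, ?_, ?_⟩
      · rcases hUn with h | h
        · left; intro i; have := h i; dsimp only; split_ifs <;> omega
        · right; intro i; have := h i; dsimp only; split_ifs <;> omega
      · rw [Finset.sum_sub_distrib]
        have h2 : ∑ i, (if i = (0:Fin 8) then (2:ℤ) else 0) = 2 := by simp
        rw [h2]
        omega
      · intro i; dsimp only; rw [hn i]; split_ifs <;> ring

lemma core_k24 (c n : Fin 8 → ℤ) (hn : ∀ i, c i = 2 * n i)
    (hsn : (2:ℤ) ∣ ∑ i, n i)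
    (hk : ((univ.filter (fun i => n i % 2 = 1)).card = 2) ∨
          ((univ.filter (fun i => n i % 2 = 1)).card = 4)) :
    CoreGoal c := by
  set S := univ.filter (fun i => n i % 2 = 1) with hS_def
  have hSne : S.Nonempty := Finset.card_pos.mp (by omega)
  obtain ⟨p, hp⟩ := hSne
  have hpodd : n p % 2 = 1 := by
    simpa [hS_def] using hp
  set K : ℤ := (S.card : ℤ) with hK_def
  have hK : K = 2 ∨ K = 4 := by omega
  obtain ⟨s, hs12, hs8⟩ : ∃ s : ℤ, (s = 2 ∨ s = -2) ∧
      (8:ℤ) ∣ (2 * ∑ i, n i - 2 * K - s + 2) := by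
    by_cases h : (∑ i, n i - K) % 4 = 0
    · exact ⟨2, Or.inl rfl, by omega⟩
    · exact ⟨-2, Or.inr rfl, by omega⟩
  set e : Fin 8 → ℤ := fun i => (if n i % 2 = 1 then 2 else 0) + (if i = p then s - 2 else 0)
    with he_def
  have hsume : ∑ i, e i = 2 * K + (s - 2) := by
    rw [he_def, Finset.sum_add_distrib, sum_ind (fun i => n i % 2 = 1) 2]
    simp [hK_def, mul_comm]; rfl
  have hsq : ∀ i, (e i)^2 = if n i % 2 = 1 then 4 else 0 := by
    intro i
    by_cases hip : i = p
    · subst hip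
      rw [he_def]; dsimp only
      rw [if_pos hpodd, if_pos rfl, if_pos hpodd]
      rcases hs12 with h | h <;> rw [h] <;> ring
    · rw [he_def]; dsimp only
      rw [if_neg hip, add_zero]
      split_ifs <;> ring
  have hsumsq : ∑ i, (e i)^2 = 4 * K := by
    rw [show (fun i => (e i)^2) = fun i => (if n i % 2 = 1 then (4:ℤ) else 0) from
      funext fun i => hsq i]
    rw [sum_ind (fun i => n i % 2 = 1) 4]
    rw [hK_def]; ring
  have hdvd : ∀ i, (2:ℤ) ∣ (c i - e i) := by
    intro i
    rw [hn i, he_def]; dsimp only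
    split_ifs <;> omega
  refine ⟨e, ?_, ?_, ?_, fun i => (c i - e i) / 2, ?_, ?_, ?_⟩
  · left; intro i
    rw [he_def]; dsimp only
    split_ifs <;> omega
  · rw [hsume]; omega
  · rw [hsumsq]; omega
  · left; intro i
    dsimp only
    have h4 : (4:ℤ) ∣ (c i - e i) := by
      rw [hn i, he_def]; dsimp only
      by_cases hip : i = p
      · subst hip
        rw [if_pos hpodd, if_pos rfl]
        omega
      · rw [if_neg hip, add_zero]
        split_ifs <;> omega
    omega
  · have h2 := two_mul_sum_div c e hdvd
    have hsumc : ∑ i, c i = 2 * ∑ i, n i := by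
      rw [Finset.mul_sum]; exact Finset.sum_congr rfl fun i _ => hn i
    rw [hsumc, hsume] at h2
    dsimp only
    omega
  · intro i
    exact (Int.mul_ediv_cancel' (hdvd i)).symm

lemma core_k6 (c n : Fin 8 → ℤ) (hn : ∀ i, c i = 2 * n i)
    (hsn : (2:ℤ) ∣ ∑ i, n i)
    (hk : (univ.filter (fun i => n i % 2 = 1)).card = 6) :
    CoreGoal c := by
  set S := univ.filter (fun i => n i % 2 = 1) with hS_def
  have hcompl : Sᶜ.card = 2 := by
    rw [Finset.card_compl, hk]; rfl
  obtain ⟨p, q, hpq, hpair⟩ := Finset.card_eq_two.mp hcompl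
  have hmemS : ∀ i, i ∈ S ↔ n i % 2 = 1 := by
    intro i; simp [hS_def]
  have hp : n p % 2 = 0 := by
    have : p ∉ S := by
      rw [← Finset.mem_compl, hpair]; simp
    rw [hmemS] at this; omega
  have hq : n q % 2 = 0 := by
    have : q ∉ S := by
      rw [← Finset.mem_compl, hpair]; simp
    rw [hmemS] at this; omega
  have hother : ∀ i, i ≠ p → i ≠ q → n i % 2 = 1 := by
    intro i h1 h2
    have : i ∈ S := by
      rw [← Finset.notMem_compl, hpair]; simp [h1, h2]
    rwa [hmemS] at this
  obtain ⟨σ, hσ1, hσ2⟩ : ∃ σ : ℤ, (σ = 1 ∨ σ = -1) ∧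
      (4:ℤ) ∣ (∑ i, n i - 1 - σ) := by
    by_cases h : (∑ i, n i) % 4 = 2
    · exact ⟨1, Or.inl rfl, by omega⟩
    · exact ⟨-1, Or.inr rfl, by omega⟩
  set e : Fin 8 → ℤ := fun i => (if i = p then 2 else 0) + (if i = q then 2*σ else 0)
    with he_def
  have hsume : ∑ i, e i = 2 + 2*σ := by
    rw [he_def, Finset.sum_add_distrib]
    simp
  have hsq : ∀ i, (e i)^2 = (if i = p then (4:ℤ) else 0) + (if i = q then 4 else 0) := by
    intro i
    rw [he_def]; dsimp only
    by_cases h1 : i = p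
    · subst h1
      rw [if_pos rfl, if_neg hpq, if_pos rfl, if_neg hpq]
      ring
    · rw [if_neg h1, if_neg h1, zero_add, zero_add]
      split_ifs
      · rcases hσ1 with h | h <;> rw [h] <;> ring
      · ring
  have hsumsq : ∑ i, (e i)^2 = 8 := by
    rw [show (fun i => (e i)^2) =
        fun i => (if i = p then (4:ℤ) else 0) + (if i = q then 4 else 0) from
      funext fun i => hsq i]
    rw [Finset.sum_add_distrib]
    simp
  have hdvd : ∀ i, (2:ℤ) ∣ (c i - e i) := by
    intro i
    rw [hn i, he_def]; dsimp only
    split_ifs <;> omega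
  refine ⟨e, ?_, ?_, Or.inl hsumsq, fun i => (c i - e i) / 2, ?_, ?_, ?_⟩
  · left; intro i
    rw [he_def]; dsimp only
    split_ifs <;> omega
  · rw [hsume]; omega
  · right; intro i
    dsimp only
    rw [hn i, he_def]; dsimp only
    by_cases h1 : i = p
    · subst h1; rw [if_pos rfl, if_neg hpq]; omega
    · rw [if_neg h1, zero_add]
      by_cases h2 : i = q
      · subst h2; rw [if_pos rfl]; omega
      · rw [if_neg h2]
        have := hother i h1 h2; omega
  · have h2 := two_mul_sum_div c e hdvd
    have hsumc : ∑ i, c i = 2 * ∑ i, n i := by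
      rw [Finset.mul_sum]; exact Finset.sum_congr rfl fun i _ => hn i
    rw [hsumc, hsume] at h2
    dsimp only
    omega
  · intro i
    exact (Int.mul_ediv_cancel' (hdvd i)).symm

lemma core_odd (c : Fin 8 → ℤ) (hodd : ∀ i, c i % 2 = 1)
    (hs : (4:ℤ) ∣ ∑ i, c i) :
    CoreGoal c := by
  set b : Fin 8 → ℤ := fun i => if c i % 4 = 3 then -1 else 1 with hb_def
  have hb1 : ∀ i, b i = 1 ∨ b i = -1 := by
    intro i; rw [hb_def]; dsimp only; split_ifs <;> simp
  have hcb : ∀ i, (4:ℤ) ∣ (c i - b i) := by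
    intro i; have := hodd i; rw [hb_def]; dsimp only; split_ifs <;> omega
  have hsb : (4:ℤ) ∣ ∑ i, b i := by
    have h1 : (4:ℤ) ∣ ∑ i, (c i - b i) := Finset.dvd_sum fun i _ => hcb i
    rw [Finset.sum_sub_distrib] at h1
    omega
  obtain ⟨t, ht1, ht2⟩ : ∃ t : ℤ, (t = 0 ∨ t = -4 * b 0) ∧
      (8:ℤ) ∣ (∑ i, c i - ∑ i, b i - t) := by
    by_cases h : (∑ i, c i - ∑ i, b i) % 8 = 0
    · exact ⟨0, Or.inl rfl, by omega⟩
    · refine ⟨-4 * b 0, Or.inr rfl, ?_⟩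
      have h4 : (4:ℤ) ∣ (∑ i, c i - ∑ i, b i) := by
        omega
      rcases hb1 0 with h0 | h0 <;> rw [h0] <;> omega
  set e : Fin 8 → ℤ := fun i => b i + (if i = 0 then t else 0) with he_def
  have hsume : ∑ i, e i = ∑ i, b i + t := by
    rw [he_def, Finset.sum_add_distrib]
    simp
  have ht4 : t = 0 ∨ t = 4 ∨ t = -4 := by
    rcases ht1 with h | h
    · left; exact h
    · rcases hb1 0 with h0 | h0 <;> rw [h, h0] <;> omega
  have he0 : e 0 = b 0 + t := by rw [he_def]; dsimp only; rw [if_pos rfl]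
  have hei : ∀ i, i ≠ 0 → e i = b i := by
    intro i hi; rw [he_def]; dsimp only; rw [if_neg hi, add_zero]
  have hsq : ∀ i, (e i)^2 = (if i = 0 then (e 0)^2 - 1 else 0) + 1 := by
    intro i
    by_cases h1 : i = 0
    · subst h1; rw [if_pos rfl]; ring
    · rw [if_neg h1, hei i h1, zero_add]
      rcases hb1 i with h | h <;> rw [h] <;> ring
  have hsumsq : ∑ i, (e i)^2 = (e 0)^2 + 7 := by
    rw [show (fun i => (e i)^2) = fun i => (if i = 0 then (e 0)^2 - 1 else 0) + 1 from
      funext fun i => hsq i]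
    rw [Finset.sum_add_distrib]
    simp
    ring
  have he0sq : (e 0)^2 = 1 ∨ (e 0)^2 = 9 := by
    rw [he0]
    rcases ht1 with h | h
    · rw [h, add_zero]; rcases hb1 0 with h0 | h0 <;> rw [h0] <;> norm_num
    · rw [h]; rcases hb1 0 with h0 | h0 <;> rw [h0] <;> norm_num
  have hdvd : ∀ i, (2:ℤ) ∣ (c i - e i) := by
    intro i
    by_cases h1 : i = 0
    · subst h1; rw [he0]; have := hcb 0; omega
    · rw [hei i h1]; have := hcb i; omega
  refine ⟨e, ?_, ?_, ?_, fun i => (c i - e i) / 2, ?_, ?_, ?_⟩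
  · right; intro i
    by_cases h1 : i = 0
    · subst h1; rw [he0]; rcases hb1 0 with h | h <;> rw [h] <;> omega
    · rw [hei i h1]; rcases hb1 i with h | h <;> rw [h] <;> decide
  · rw [hsume]; omega
  · rw [hsumsq]; omega
  · left; intro i
    dsimp only
    by_cases h1 : i = 0
    · subst h1; rw [he0]
      have := hcb 0; omega
    · rw [hei i h1]
      have := hcb i; omega
  · have h2 := two_mul_sum_div c e hdvd
    rw [hsume] at h2
    dsimp only
    omega
  · intro i
    exact (Int.mul_ediv_cancel' (hdvd i)).symm

lemma core (c : Fin 8 → ℤ) (hc : Uni c) (hs : (4:ℤ) ∣ ∑ i, c i)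
    (hnz : ¬ ∃ d : Fin 8 → ℤ, Uni d ∧ ((4:ℤ) ∣ ∑ i, d i) ∧ ∀ i, c i = 2 * d i) :
    CoreGoal c := by
  rcases hc with hev | hodd
  · set n : Fin 8 → ℤ := fun i => c i / 2 with hn_def
    have hn : ∀ i, c i = 2 * n i := fun i => by
      have := hev i; simp only [hn_def]; omega
    have hsumc : ∑ i, c i = 2 * ∑ i, n i := by
      rw [Finset.mul_sum]; exact Finset.sum_congr rfl fun i _ => hn i
    have hsn : (2:ℤ) ∣ ∑ i, n i := by omega
    set S : Finset (Fin 8) := univ.filter (fun i => n i % 2 = 1) with hS_def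
    have hkmod : ∑ i, (n i % 2) = (S.card : ℤ) := by
      rw [show (fun i => n i % 2) = fun i => (if n i % 2 = 1 then (1:ℤ) else 0) from
        funext fun i => by split_ifs with h <;> omega]
      have := sum_ind (fun i => n i % 2 = 1) 1
      simp only [mul_one] at this
      exact this
    have hkdvd : (2:ℤ) ∣ (S.card : ℤ) := by
      have h1 : (2:ℤ) ∣ ∑ i, (n i - n i % 2) := Finset.dvd_sum fun i _ => by omega
      rw [Finset.sum_sub_distrib, hkmod] at h1
      omega
    have hk8 : S.card ≤ 8 := by
      simpa using Finset.card_le_univ S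
    have hkcases : S.card = 0 ∨ S.card = 2 ∨ S.card = 4 ∨ S.card = 6 ∨ S.card = 8 := by
      have : (2:ℕ) ∣ S.card := by exact_mod_cast hkdvd
      omega
    rcases hkcases with hk | hk | hk | hk | hk
    · refine core_k08 c n hn (Or.inl fun i => ?_) hsn hnz
      have : i ∉ S := by simp [Finset.card_eq_zero.mp hk]
      simp only [hS_def, Finset.mem_filter, Finset.mem_univ, true_and] at this
      omega
    · exact core_k24 c n hn hsn (Or.inl hk)
    · exact core_k24 c n hn hsn (Or.inr hk)
    · exact core_k6 c n hn hsn hk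
    · refine core_k08 c n hn (Or.inr fun i => ?_) hsn hnz
      have hSu : S = univ := Finset.eq_univ_of_card S (by simpa using hk)
      have : i ∈ S := hSu ▸ Finset.mem_univ i
      simp only [hS_def, Finset.mem_filter, Finset.mem_univ, true_and] at this
      exact this
  · exact core_odd c hodd hs

lemma inE8_half (d : Fin 8 → ℤ) (h1 : Uni d) (h2 : (4:ℤ) ∣ ∑ i, d i) :
    inE8 (fun i => (d i : ℝ) / 2) := by
  constructor
  · rcases h1 with h | h
    · left; intro i
      refine ⟨d i / 2, ?_⟩
      have hi := h i
      have h2 : (d i : ℝ) = ((2 * (d i / 2) : ℤ) : ℝ) := by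
        congr 1; omega
      dsimp only; rw [h2]; push_cast; ring
    · right; intro i
      refine ⟨d i / 2, ?_⟩
      have hi := h i
      have h2 : (d i : ℝ) = ((2 * (d i / 2) + 1 : ℤ) : ℝ) := by
        congr 1; omega
      dsimp only; rw [h2]; push_cast; ring
  · obtain ⟨m, hm⟩ := h2
    refine ⟨m, ?_⟩
    have hc : ((∑ i, d i : ℤ) : ℝ) = ∑ i, ((d i : ℝ)) := by push_cast; rfl
    rw [← Finset.sum_div, ← hc, hm]
    push_cast; ring

/-- Every nonzero class in E8/2E8 contains a vector of norm 2 or a vector of norm 4. -/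
theorem e8_mod_two_contains_short_vector (u : Fin 8 → ℝ) (hu : inE8 u)
    (hnz : ¬ ∃ w : Fin 8 → ℝ, inE8 w ∧ u = (2 : ℝ) • w) :
    ∃ v : Fin 8 → ℝ, inE8 v ∧ (dot8 v v = 2 ∨ dot8 v v = 4) ∧
      ∃ w : Fin 8 → ℝ, inE8 w ∧ u - v = (2 : ℝ) • w := by
  obtain ⟨hpar, m, hm⟩ := hu
  obtain ⟨c, hceq, hUc⟩ : ∃ c : Fin 8 → ℤ, (∀ i, u i = (c i : ℝ) / 2) ∧ Uni c := by
    rcases hpar with h | h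
    · choose n hn using h
      refine ⟨fun i => 2 * n i, fun i => ?_, Or.inl fun i => by show (2 * n i) % 2 = 0; omega⟩
      rw [hn i]; push_cast; ring
    · choose n hn using h
      refine ⟨fun i => 2 * n i + 1, fun i => ?_, Or.inr fun i => by show (2 * n i + 1) % 2 = 1; omega⟩
      rw [hn i]; push_cast; ring
  have hsc : (4:ℤ) ∣ ∑ i, c i := by
    have h1 : ∑ i, u i = ((∑ i, c i : ℤ) : ℝ) / 2 := by
      rw [Finset.sum_congr rfl fun i _ => hceq i]
      push_cast
      rw [Finset.sum_div]
    have h2 : ((∑ i, c i : ℤ) : ℝ) = ((4 * m : ℤ) : ℝ) := by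
      rw [h1] at hm
      push_cast at hm ⊢
      linarith
    have h3 : ∑ i, c i = 4 * m := by exact_mod_cast h2
    exact ⟨m, h3⟩
  have hnzc : ¬ ∃ d : Fin 8 → ℤ, Uni d ∧ ((4:ℤ) ∣ ∑ i, d i) ∧ ∀ i, c i = 2 * d i := by
    rintro ⟨d, hUd, hsd, hcd⟩
    apply hnz
    refine ⟨fun i => (d i : ℝ) / 2, inE8_half d hUd hsd, ?_⟩
    funext i
    rw [Pi.smul_apply, smul_eq_mul, hceq i, hcd i]
    push_cast; ring
  obtain ⟨e, hUe, hse, hnorm, d, hUd, hsd, hde⟩ := core c hUc hsc hnzc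
  refine ⟨fun i => (e i : ℝ) / 2, inE8_half e hUe hse, ?_, fun i => (d i : ℝ) / 2,
    inE8_half d hUd hsd, ?_⟩
  · have hdot : dot8 (fun i => (e i : ℝ) / 2) (fun i => (e i : ℝ) / 2) =
        ((∑ i, (e i)^2 : ℤ) : ℝ) / 4 := by
      unfold dot8
      push_cast
      rw [Finset.sum_div]
      exact Finset.sum_congr rfl fun i _ => by ring
    rcases hnorm with h | h
    · left; rw [hdot, h]; norm_num
    · right; rw [hdot, h]; norm_num
  · funext i
    rw [Pi.sub_apply, Pi.smul_apply, smul_eq_mul, hceq i]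
    have := hde i
    have hr : ((c i : ℝ)) - (e i : ℝ) = 2 * (d i : ℝ) := by exact_mod_cast congrArg (Int.cast : ℤ → ℝ) this
    show (c i : ℝ) / 2 - (e i : ℝ) / 2 = 2 * ((d i : ℝ) / 2)
    linarith
end
end

section
/- Ramanujan's identity: the normalized Eisenstein series satisfy q·(d/dq)E_4 = (E_2·E_4 − E_6)/3 as formal power series in q, where E_2 = 1 − 24·Σ σ_1(n)q^n, E_4 = 1 + 240·Σ σ_3(n)q^n, and E_6 = 1 − 504·Σ σ_5(n)q^n. -/
noncomputable section

/-- The k-th divisor power sum function. -/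
def sigmaFn (k n : ℕ) : ℕ := ∑ d ∈ n.divisors, d ^ k

/-- The normalized Eisenstein series E₂ as a formal power series. -/
def Eis2 : PowerSeries ℚ :=
  PowerSeries.mk fun n => if n = 0 then 1 else -24 * (sigmaFn 1 n : ℚ)

/-- The normalized Eisenstein series E₄ as a formal power series. -/
def Eis4 : PowerSeries ℚ :=
  PowerSeries.mk fun n => if n = 0 then 1 else 240 * (sigmaFn 3 n : ℚ)

/-- The normalized Eisenstein series E₆ as a formal power series. -/
def Eis6 : PowerSeries ℚ :=
  PowerSeries.mk fun n => if n = 0 then 1 else -504 * (sigmaFn 5 n : ℚ)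

/-- The formal derivation D = q·d/dq, sending Σ aₙqⁿ to Σ n·aₙqⁿ. -/
def Dq (F : PowerSeries ℚ) : PowerSeries ℚ :=
  PowerSeries.mk fun n => (n : ℚ) * PowerSeries.coeff (R := ℚ) n F

open Finset

/-- Quadruples ((a,x),(b,y)). -/
abbrev Quad : Type := (ℕ × ℕ) × (ℕ × ℕ)

/-- The solution set of a*x + b*y = n in positive integers. -/
def Sf (n : ℕ) : Finset Quad :=
  (((range (n+1)) ×ˢ (range (n+1))) ×ˢ ((range (n+1)) ×ˢ (range (n+1)))).filter
    fun s => 1 ≤ s.1.1 ∧ 1 ≤ s.1.2 ∧ 1 ≤ s.2.1 ∧ 1 ≤ s.2.2 ∧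
      s.1.1 * s.1.2 + s.2.1 * s.2.2 = n

lemma mem_Sf {n : ℕ} {s : Quad} :
    s ∈ Sf n ↔ 1 ≤ s.1.1 ∧ 1 ≤ s.1.2 ∧ 1 ≤ s.2.1 ∧ 1 ≤ s.2.2 ∧
      s.1.1 * s.1.2 + s.2.1 * s.2.2 = n := by
  obtain ⟨⟨a, x⟩, b, y⟩ := s
  simp only [Sf, mem_filter, mem_product, mem_range]
  constructor
  · rintro ⟨-, h⟩; exact h
  · rintro ⟨ha, hx, hb, hy, h⟩
    have h1 : a ≤ a * x := Nat.le_mul_of_pos_right a hx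
    have h2 : x ≤ a * x := Nat.le_mul_of_pos_left x ha
    have h3 : b ≤ b * y := Nat.le_mul_of_pos_right b hy
    have h4 : y ≤ b * y := Nat.le_mul_of_pos_left y hb
    exact ⟨⟨⟨by omega, by omega⟩, by omega, by omega⟩, ha, hx, hb, hy, h⟩

lemma nat_mul_sub' (b x y : ℕ) (h : x ≤ y) : b * (y - x) = b * y - b * x := by
  obtain ⟨c, rfl⟩ := Nat.exists_eq_add_of_le h
  rw [Nat.add_sub_cancel_left, Nat.mul_add]
  omega

/-- Faulhaber for fourth powers. -/
lemma sum_pow4 (d : ℕ) : ∑ a ∈ Ico 1 d, (a:ℚ)^4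
    = (6*(d:ℚ)^5 - 15*(d:ℚ)^4 + 10*(d:ℚ)^3 - (d:ℚ))/30 := by
  induction d with
  | zero => simp
  | succ m ih =>
    rcases Nat.eq_zero_or_pos m with rfl | hm
    · norm_num
    · rw [Finset.sum_Ico_succ_top (by omega), ih]
      push_cast
      ring

lemma sum_tri {α : Type*} (t : Finset α) (f : α → ℚ) (u v : α → ℕ) :
    ∑ s ∈ t, f s
      = ∑ s ∈ t.filter (fun s => u s < v s), f s
        + ∑ s ∈ t.filter (fun s => v s < u s), f s
        + ∑ s ∈ t.filter (fun s => u s = v s), f s := by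
  have e1 := Finset.sum_filter_add_sum_filter_not t (fun s => u s < v s) f
  have e2 := Finset.sum_filter_add_sum_filter_not
    (t.filter (fun s => ¬ u s < v s)) (fun s => v s < u s) f
  rw [Finset.filter_filter, Finset.filter_filter] at e2
  have e3 : t.filter (fun s => ¬ u s < v s ∧ v s < u s)
      = t.filter (fun s => v s < u s) := by
    ext s; simp only [Finset.mem_filter]
    constructor
    · rintro ⟨h, -, h2⟩; exact ⟨h, h2⟩
    · rintro ⟨h, h2⟩; exact ⟨h, by omega, h2⟩
  have e4 : t.filter (fun s => ¬ u s < v s ∧ ¬ v s < u s)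
      = t.filter (fun s => u s = v s) := by
    ext s; simp only [Finset.mem_filter]
    constructor
    · rintro ⟨h, h1, h2⟩; exact ⟨h, by omega⟩
    · rintro ⟨h, h2⟩; exact ⟨h, by omega, by omega⟩
  rw [e3, e4] at e2
  linarith

lemma sigmaFn_cast (k p : ℕ) :
    (sigmaFn k p : ℚ) = ∑ de ∈ p.divisorsAntidiagonal, (de.1:ℚ)^k := by
  rw [sigmaFn]
  push_cast
  exact (Nat.sum_divisorsAntidiagonal (fun d e => (d:ℚ)^k)).symm

lemma sigmaFn_one_cast (p : ℕ) :
    (sigmaFn 1 p : ℚ) = ∑ de ∈ p.divisorsAntidiagonal, (de.1:ℚ) := by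
  rw [sigmaFn_cast 1 p]
  exact Finset.sum_congr rfl fun de _ => pow_one _

/-- ∑ over {b<a} of a⁴ equals ∑ over {x<y} of (a+b)⁴. -/
lemma transport_h3 (n : ℕ) :
    ∑ s ∈ (Sf n).filter (fun s => s.2.1 < s.1.1), ((s.1.1:ℚ))^4
      = ∑ s ∈ (Sf n).filter (fun s => s.1.2 < s.2.2), ((s.1.1:ℚ) + (s.2.1:ℚ))^4 := by
  refine Finset.sum_nbij'
    (fun s => ((s.1.1 - s.2.1, s.1.2), (s.2.1, s.2.2 + s.1.2)))
    (fun s => ((s.1.1 + s.2.1, s.1.2), (s.2.1, s.2.2 - s.1.2))) ?_ ?_ ?_ ?_ ?_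
  · rintro ⟨⟨a, x⟩, b, y⟩ hs
    rw [Finset.mem_filter, mem_Sf] at hs
    rw [Finset.mem_filter, mem_Sf]
    dsimp only at hs ⊢
    obtain ⟨⟨ha, hx, hb, hy, heq⟩, hba⟩ := hs
    have h2 : (a - b) * x = a * x - b * x := by
      rw [Nat.mul_comm, nat_mul_sub' x b a (by omega), Nat.mul_comm x a, Nat.mul_comm x b]
    have h3 : b * (y + x) = b * y + b * x := by rw [Nat.mul_add]
    have h4 : b * x ≤ a * x := Nat.mul_le_mul (le_of_lt hba) (le_refl x)
    refine ⟨⟨by omega, hx, hb, by omega, by omega⟩, by omega⟩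
  · rintro ⟨⟨a, x⟩, b, y⟩ hs
    rw [Finset.mem_filter, mem_Sf] at hs
    rw [Finset.mem_filter, mem_Sf]
    dsimp only at hs ⊢
    obtain ⟨⟨ha, hx, hb, hy, heq⟩, hxy⟩ := hs
    have h2 : (a + b) * x = a * x + b * x := by rw [Nat.add_mul]
    have h3 : b * (y - x) = b * y - b * x := nat_mul_sub' b x y (by omega)
    have h4 : b * x ≤ b * y := Nat.mul_le_mul (le_refl b) (by omega)
    refine ⟨⟨by omega, hx, hb, by omega, by omega⟩, by omega⟩
  · rintro ⟨⟨a, x⟩, b, y⟩ hs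
    rw [Finset.mem_filter, mem_Sf] at hs
    dsimp only at hs
    obtain ⟨⟨ha, hx, hb, hy, heq⟩, hba⟩ := hs
    dsimp only
    rw [show a - b + b = a from by omega, show y + x - x = y from by omega]
  · rintro ⟨⟨a, x⟩, b, y⟩ hs
    rw [Finset.mem_filter, mem_Sf] at hs
    dsimp only at hs
    obtain ⟨⟨ha, hx, hb, hy, heq⟩, hxy⟩ := hs
    dsimp only
    rw [show a + b - b = a from by omega, show y - x + x = y from by omega]
  · rintro ⟨⟨a, x⟩, b, y⟩ hs
    rw [Finset.mem_filter, mem_Sf] at hs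
    dsimp only at hs
    obtain ⟨⟨ha, hx, hb, hy, heq⟩, hba⟩ := hs
    dsimp only
    rw [Nat.cast_sub (le_of_lt hba)]
    ring

/-- ∑ over {a<b} of a⁴ equals ∑ over {y<x} of a⁴. -/
lemma transport_h4 (n : ℕ) :
    ∑ s ∈ (Sf n).filter (fun s => s.1.1 < s.2.1), ((s.1.1:ℚ))^4
      = ∑ s ∈ (Sf n).filter (fun s => s.2.2 < s.1.2), ((s.1.1:ℚ))^4 := by
  refine Finset.sum_nbij'
    (fun s => ((s.1.1, s.1.2 + s.2.2), (s.2.1 - s.1.1, s.2.2)))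
    (fun s => ((s.1.1, s.1.2 - s.2.2), (s.1.1 + s.2.1, s.2.2))) ?_ ?_ ?_ ?_ ?_
  · rintro ⟨⟨a, x⟩, b, y⟩ hs
    rw [Finset.mem_filter, mem_Sf] at hs
    rw [Finset.mem_filter, mem_Sf]
    dsimp only at hs ⊢
    obtain ⟨⟨ha, hx, hb, hy, heq⟩, hab⟩ := hs
    have h2 : a * (x + y) = a * x + a * y := by rw [Nat.mul_add]
    have h3 : (b - a) * y = b * y - a * y := by
      rw [Nat.mul_comm, nat_mul_sub' y a b (by omega), Nat.mul_comm y a, Nat.mul_comm y b]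
    have h4 : a * y ≤ b * y := Nat.mul_le_mul (le_of_lt hab) (le_refl y)
    refine ⟨⟨ha, by omega, by omega, hy, by omega⟩, by omega⟩
  · rintro ⟨⟨a, x⟩, b, y⟩ hs
    rw [Finset.mem_filter, mem_Sf] at hs
    rw [Finset.mem_filter, mem_Sf]
    dsimp only at hs ⊢
    obtain ⟨⟨ha, hx, hb, hy, heq⟩, hyx⟩ := hs
    have h2 : a * (x - y) = a * x - a * y := nat_mul_sub' a y x (by omega)
    have h3 : (a + b) * y = a * y + b * y := by rw [Nat.add_mul]
    have h4 : a * y ≤ a * x := Nat.mul_le_mul (le_refl a) (by omega)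
    refine ⟨⟨ha, by omega, by omega, hy, by omega⟩, by omega⟩
  · rintro ⟨⟨a, x⟩, b, y⟩ hs
    rw [Finset.mem_filter, mem_Sf] at hs
    dsimp only at hs
    obtain ⟨⟨ha, hx, hb, hy, heq⟩, hab⟩ := hs
    dsimp only
    rw [show x + y - y = x from by omega, show a + (b - a) = b from by omega]
  · rintro ⟨⟨a, x⟩, b, y⟩ hs
    rw [Finset.mem_filter, mem_Sf] at hs
    dsimp only at hs
    obtain ⟨⟨ha, hx, hb, hy, heq⟩, hyx⟩ := hs
    dsimp only
    rw [show x - y + y = x from by omega, show a + b - a = b from by omega]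
  · rintro ⟨⟨a, x⟩, b, y⟩ _
    rfl

/-- swap symmetry on region sums for (a+b)⁴. -/
lemma transport_I3 (n : ℕ) :
    ∑ s ∈ (Sf n).filter (fun s => s.2.2 < s.1.2), ((s.1.1:ℚ) + (s.2.1:ℚ))^4
      = ∑ s ∈ (Sf n).filter (fun s => s.1.2 < s.2.2), ((s.1.1:ℚ) + (s.2.1:ℚ))^4 := by
  refine Finset.sum_nbij' (fun s => (s.2, s.1)) (fun s => (s.2, s.1)) ?_ ?_ ?_ ?_ ?_
  · rintro ⟨⟨a, x⟩, b, y⟩ hs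
    rw [Finset.mem_filter, mem_Sf] at hs
    rw [Finset.mem_filter, mem_Sf]
    dsimp only at hs ⊢
    obtain ⟨⟨ha, hx, hb, hy, heq⟩, hreg⟩ := hs
    exact ⟨⟨hb, hy, ha, hx, by omega⟩, hreg⟩
  · rintro ⟨⟨a, x⟩, b, y⟩ hs
    rw [Finset.mem_filter, mem_Sf] at hs
    rw [Finset.mem_filter, mem_Sf]
    dsimp only at hs ⊢
    obtain ⟨⟨ha, hx, hb, hy, heq⟩, hreg⟩ := hs
    exact ⟨⟨hb, hy, ha, hx, by omega⟩, hreg⟩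
  · rintro ⟨⟨a, x⟩, b, y⟩ _; rfl
  · rintro ⟨⟨a, x⟩, b, y⟩ _; rfl
  · rintro ⟨⟨a, x⟩, b, y⟩ _
    dsimp only
    ring

/-- ∑ over {b<a} of (a-b)⁴ = ∑ over {x<y} of a⁴. -/
lemma transport_h5a (n : ℕ) :
    ∑ s ∈ (Sf n).filter (fun s => s.2.1 < s.1.1), ((s.1.1:ℚ) - (s.2.1:ℚ))^4
      = ∑ s ∈ (Sf n).filter (fun s => s.1.2 < s.2.2), ((s.1.1:ℚ))^4 := by
  refine Finset.sum_nbij'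
    (fun s => ((s.1.1 - s.2.1, s.1.2), (s.2.1, s.2.2 + s.1.2)))
    (fun s => ((s.1.1 + s.2.1, s.1.2), (s.2.1, s.2.2 - s.1.2))) ?_ ?_ ?_ ?_ ?_
  · rintro ⟨⟨a, x⟩, b, y⟩ hs
    rw [Finset.mem_filter, mem_Sf] at hs
    rw [Finset.mem_filter, mem_Sf]
    dsimp only at hs ⊢
    obtain ⟨⟨ha, hx, hb, hy, heq⟩, hba⟩ := hs
    have h2 : (a - b) * x = a * x - b * x := by
      rw [Nat.mul_comm, nat_mul_sub' x b a (by omega), Nat.mul_comm x a, Nat.mul_comm x b]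
    have h3 : b * (y + x) = b * y + b * x := by rw [Nat.mul_add]
    have h4 : b * x ≤ a * x := Nat.mul_le_mul (le_of_lt hba) (le_refl x)
    refine ⟨⟨by omega, hx, hb, by omega, by omega⟩, by omega⟩
  · rintro ⟨⟨a, x⟩, b, y⟩ hs
    rw [Finset.mem_filter, mem_Sf] at hs
    rw [Finset.mem_filter, mem_Sf]
    dsimp only at hs ⊢
    obtain ⟨⟨ha, hx, hb, hy, heq⟩, hxy⟩ := hs
    have h2 : (a + b) * x = a * x + b * x := by rw [Nat.add_mul]
    have h3 : b * (y - x) = b * y - b * x := nat_mul_sub' b x y (by omega)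
    have h4 : b * x ≤ b * y := Nat.mul_le_mul (le_refl b) (by omega)
    refine ⟨⟨by omega, hx, hb, by omega, by omega⟩, by omega⟩
  · rintro ⟨⟨a, x⟩, b, y⟩ hs
    rw [Finset.mem_filter, mem_Sf] at hs
    dsimp only at hs
    obtain ⟨⟨ha, hx, hb, hy, heq⟩, hba⟩ := hs
    dsimp only
    rw [show a - b + b = a from by omega, show y + x - x = y from by omega]
  · rintro ⟨⟨a, x⟩, b, y⟩ hs
    rw [Finset.mem_filter, mem_Sf] at hs
    dsimp only at hs
    obtain ⟨⟨ha, hx, hb, hy, heq⟩, hxy⟩ := hs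
    dsimp only
    rw [show a + b - b = a from by omega, show y - x + x = y from by omega]
  · rintro ⟨⟨a, x⟩, b, y⟩ hs
    rw [Finset.mem_filter, mem_Sf] at hs
    dsimp only at hs
    obtain ⟨⟨ha, hx, hb, hy, heq⟩, hba⟩ := hs
    dsimp only
    rw [Nat.cast_sub (le_of_lt hba)]

/-- ∑ over {a<b} of (a-b)⁴ = ∑ over {y<x} of b⁴. -/
lemma transport_h5b (n : ℕ) :
    ∑ s ∈ (Sf n).filter (fun s => s.1.1 < s.2.1), ((s.1.1:ℚ) - (s.2.1:ℚ))^4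
      = ∑ s ∈ (Sf n).filter (fun s => s.2.2 < s.1.2), ((s.2.1:ℚ))^4 := by
  refine Finset.sum_nbij'
    (fun s => ((s.1.1, s.1.2 + s.2.2), (s.2.1 - s.1.1, s.2.2)))
    (fun s => ((s.1.1, s.1.2 - s.2.2), (s.1.1 + s.2.1, s.2.2))) ?_ ?_ ?_ ?_ ?_
  · rintro ⟨⟨a, x⟩, b, y⟩ hs
    rw [Finset.mem_filter, mem_Sf] at hs
    rw [Finset.mem_filter, mem_Sf]
    dsimp only at hs ⊢
    obtain ⟨⟨ha, hx, hb, hy, heq⟩, hab⟩ := hs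
    have h2 : a * (x + y) = a * x + a * y := by rw [Nat.mul_add]
    have h3 : (b - a) * y = b * y - a * y := by
      rw [Nat.mul_comm, nat_mul_sub' y a b (by omega), Nat.mul_comm y a, Nat.mul_comm y b]
    have h4 : a * y ≤ b * y := Nat.mul_le_mul (le_of_lt hab) (le_refl y)
    refine ⟨⟨ha, by omega, by omega, hy, by omega⟩, by omega⟩
  · rintro ⟨⟨a, x⟩, b, y⟩ hs
    rw [Finset.mem_filter, mem_Sf] at hs
    rw [Finset.mem_filter, mem_Sf]
    dsimp only at hs ⊢
    obtain ⟨⟨ha, hx, hb, hy, heq⟩, hyx⟩ := hs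
    have h2 : a * (x - y) = a * x - a * y := nat_mul_sub' a y x (by omega)
    have h3 : (a + b) * y = a * y + b * y := by rw [Nat.add_mul]
    have h4 : a * y ≤ a * x := Nat.mul_le_mul (le_refl a) (by omega)
    refine ⟨⟨ha, by omega, by omega, hy, by omega⟩, by omega⟩
  · rintro ⟨⟨a, x⟩, b, y⟩ hs
    rw [Finset.mem_filter, mem_Sf] at hs
    dsimp only at hs
    obtain ⟨⟨ha, hx, hb, hy, heq⟩, hab⟩ := hs
    dsimp only
    rw [show x + y - y = x from by omega, show a + (b - a) = b from by omega]
  · rintro ⟨⟨a, x⟩, b, y⟩ hs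
    rw [Finset.mem_filter, mem_Sf] at hs
    dsimp only at hs
    obtain ⟨⟨ha, hx, hb, hy, heq⟩, hyx⟩ := hs
    dsimp only
    rw [show x - y + y = x from by omega, show a + b - a = b from by omega]
  · rintro ⟨⟨a, x⟩, b, y⟩ hs
    rw [Finset.mem_filter, mem_Sf] at hs
    dsimp only at hs
    obtain ⟨⟨ha, hx, hb, hy, heq⟩, hab⟩ := hs
    dsimp only
    rw [Nat.cast_sub (le_of_lt hab)]
    ring

/-- swap: ∑ over {y<x} of b⁴ = ∑ over {x<y} of a⁴. -/
lemma transport_A4c (n : ℕ) :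
    ∑ s ∈ (Sf n).filter (fun s => s.2.2 < s.1.2), ((s.2.1:ℚ))^4
      = ∑ s ∈ (Sf n).filter (fun s => s.1.2 < s.2.2), ((s.1.1:ℚ))^4 := by
  refine Finset.sum_nbij' (fun s => (s.2, s.1)) (fun s => (s.2, s.1)) ?_ ?_ ?_ ?_ ?_
  · rintro ⟨⟨a, x⟩, b, y⟩ hs
    rw [Finset.mem_filter, mem_Sf] at hs
    rw [Finset.mem_filter, mem_Sf]
    dsimp only at hs ⊢
    obtain ⟨⟨ha, hx, hb, hy, heq⟩, hreg⟩ := hs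
    exact ⟨⟨hb, hy, ha, hx, by omega⟩, hreg⟩
  · rintro ⟨⟨a, x⟩, b, y⟩ hs
    rw [Finset.mem_filter, mem_Sf] at hs
    rw [Finset.mem_filter, mem_Sf]
    dsimp only at hs ⊢
    obtain ⟨⟨ha, hx, hb, hy, heq⟩, hreg⟩ := hs
    exact ⟨⟨hb, hy, ha, hx, by omega⟩, hreg⟩
  · rintro ⟨⟨a, x⟩, b, y⟩ _; rfl
  · rintro ⟨⟨a, x⟩, b, y⟩ _; rfl
  · rintro ⟨⟨a, x⟩, b, y⟩ _; rfl

/-- swap: ∑ a³b = ∑ ab³. -/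
lemma transport_h8 (n : ℕ) :
    ∑ s ∈ Sf n, (s.1.1:ℚ)^3 * (s.2.1:ℚ)
      = ∑ s ∈ Sf n, (s.1.1:ℚ) * (s.2.1:ℚ)^3 := by
  refine Finset.sum_nbij' (fun s => (s.2, s.1)) (fun s => (s.2, s.1)) ?_ ?_ ?_ ?_ ?_
  · rintro ⟨⟨a, x⟩, b, y⟩ hs
    rw [mem_Sf] at hs
    rw [mem_Sf]
    dsimp only at hs ⊢
    obtain ⟨ha, hx, hb, hy, heq⟩ := hs
    exact ⟨hb, hy, ha, hx, by omega⟩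
  · rintro ⟨⟨a, x⟩, b, y⟩ hs
    rw [mem_Sf] at hs
    rw [mem_Sf]
    dsimp only at hs ⊢
    obtain ⟨ha, hx, hb, hy, heq⟩ := hs
    exact ⟨hb, hy, ha, hx, by omega⟩
  · rintro ⟨⟨a, x⟩, b, y⟩ _; rfl
  · rintro ⟨⟨a, x⟩, b, y⟩ _; rfl
  · rintro ⟨⟨a, x⟩, b, y⟩ _
    dsimp only
    ring

lemma diag_d1 (n : ℕ) :
    ∑ s ∈ (Sf n).filter (fun s => s.1.2 = s.2.2), ((s.1.1:ℚ))^4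
      = ∑ de ∈ n.divisorsAntidiagonal, ∑ a ∈ Ico 1 de.1, (a:ℚ)^4 := by
  have step : ∑ s ∈ (Sf n).filter (fun s => s.1.2 = s.2.2), ((s.1.1:ℚ))^4
      = ∑ p ∈ (n.divisorsAntidiagonal).sigma (fun de => Ico 1 de.1),
          ((p.2:ℚ))^4 := by
    refine Finset.sum_nbij'
      (fun s => ⟨(s.1.1 + s.2.1, s.1.2), s.1.1⟩)
      (fun p => ((p.2, p.1.2), (p.1.1 - p.2, p.1.2))) ?_ ?_ ?_ ?_ ?_
    · rintro ⟨⟨a, x⟩, b, y⟩ hs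
      rw [Finset.mem_filter, mem_Sf] at hs
      rw [Finset.mem_sigma, Nat.mem_divisorsAntidiagonal, Finset.mem_Ico]
      dsimp only at hs ⊢
      obtain ⟨⟨ha, hx, hb, hy, heq⟩, hxy⟩ := hs
      subst hxy
      have h1 : (a + b) * x = a * x + b * x := by rw [Nat.add_mul]
      have h2 : 1 ≤ a * x := Nat.mul_le_mul ha hx
      exact ⟨⟨by omega, by omega⟩, by omega, by omega⟩
    · rintro ⟨⟨d, e⟩, a⟩ hp
      rw [Finset.mem_sigma, Nat.mem_divisorsAntidiagonal, Finset.mem_Ico] at hp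
      rw [Finset.mem_filter, mem_Sf]
      dsimp only at hp ⊢
      obtain ⟨⟨hde, hn⟩, ha1, had⟩ := hp
      have he : 1 ≤ e := by
        rcases Nat.eq_zero_or_pos e with rfl | h
        · rw [Nat.mul_zero] at hde; omega
        · exact h
      have h1 : a * e + (d - a) * e = d * e := by
        rw [Nat.mul_comm (d - a) e, nat_mul_sub' e a d (by omega), Nat.mul_comm e a,
          Nat.mul_comm e d]
        have h4 : a * e ≤ d * e := Nat.mul_le_mul (by omega) (le_refl e)
        omega
      exact ⟨⟨ha1, he, by omega, he, by omega⟩, rfl⟩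
    · rintro ⟨⟨a, x⟩, b, y⟩ hs
      rw [Finset.mem_filter, mem_Sf] at hs
      dsimp only at hs
      obtain ⟨⟨ha, hx, hb, hy, heq⟩, hxy⟩ := hs
      dsimp only
      rw [show a + b - a = b from by omega, hxy]
    · rintro ⟨⟨d, e⟩, a⟩ hp
      rw [Finset.mem_sigma, Nat.mem_divisorsAntidiagonal, Finset.mem_Ico] at hp
      dsimp only at hp
      obtain ⟨⟨hde, hn⟩, ha1, had⟩ := hp
      dsimp only
      rw [show a + (d - a) = d from by omega]
    · rintro ⟨⟨a, x⟩, b, y⟩ _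
      dsimp only
  exact step.trans (Finset.sum_sigma _ _ _)

lemma diag_d2 (n : ℕ) :
    ∑ s ∈ (Sf n).filter (fun s => s.1.2 = s.2.2), ((s.1.1:ℚ) + (s.2.1:ℚ))^4
      = ∑ de ∈ n.divisorsAntidiagonal, ((de.1:ℚ) - 1) * (de.1:ℚ)^4 := by
  have step : ∑ s ∈ (Sf n).filter (fun s => s.1.2 = s.2.2), ((s.1.1:ℚ) + (s.2.1:ℚ))^4
      = ∑ p ∈ (n.divisorsAntidiagonal).sigma (fun de => Ico 1 de.1),
          ((p.1.1:ℚ))^4 := by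
    refine Finset.sum_nbij'
      (fun s => ⟨(s.1.1 + s.2.1, s.1.2), s.1.1⟩)
      (fun p => ((p.2, p.1.2), (p.1.1 - p.2, p.1.2))) ?_ ?_ ?_ ?_ ?_
    · rintro ⟨⟨a, x⟩, b, y⟩ hs
      rw [Finset.mem_filter, mem_Sf] at hs
      rw [Finset.mem_sigma, Nat.mem_divisorsAntidiagonal, Finset.mem_Ico]
      dsimp only at hs ⊢
      obtain ⟨⟨ha, hx, hb, hy, heq⟩, hxy⟩ := hs
      subst hxy
      have h1 : (a + b) * x = a * x + b * x := by rw [Nat.add_mul]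
      have h2 : 1 ≤ a * x := Nat.mul_le_mul ha hx
      exact ⟨⟨by omega, by omega⟩, by omega, by omega⟩
    · rintro ⟨⟨d, e⟩, a⟩ hp
      rw [Finset.mem_sigma, Nat.mem_divisorsAntidiagonal, Finset.mem_Ico] at hp
      rw [Finset.mem_filter, mem_Sf]
      dsimp only at hp ⊢
      obtain ⟨⟨hde, hn⟩, ha1, had⟩ := hp
      have he : 1 ≤ e := by
        rcases Nat.eq_zero_or_pos e with rfl | h
        · rw [Nat.mul_zero] at hde; omega
        · exact h
      have h1 : a * e + (d - a) * e = d * e := by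
        rw [Nat.mul_comm (d - a) e, nat_mul_sub' e a d (by omega), Nat.mul_comm e a,
          Nat.mul_comm e d]
        have h4 : a * e ≤ d * e := Nat.mul_le_mul (by omega) (le_refl e)
        omega
      exact ⟨⟨ha1, he, by omega, he, by omega⟩, rfl⟩
    · rintro ⟨⟨a, x⟩, b, y⟩ hs
      rw [Finset.mem_filter, mem_Sf] at hs
      dsimp only at hs
      obtain ⟨⟨ha, hx, hb, hy, heq⟩, hxy⟩ := hs
      dsimp only
      rw [show a + b - a = b from by omega, hxy]
    · rintro ⟨⟨d, e⟩, a⟩ hp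
      rw [Finset.mem_sigma, Nat.mem_divisorsAntidiagonal, Finset.mem_Ico] at hp
      dsimp only at hp
      obtain ⟨⟨hde, hn⟩, ha1, had⟩ := hp
      dsimp only
      rw [show a + (d - a) = d from by omega]
    · rintro ⟨⟨a, x⟩, b, y⟩ _
      dsimp only
      push_cast
      ring
  refine step.trans ((Finset.sum_sigma _ _ _).trans (Finset.sum_congr rfl ?_))
  intro de hde
  rw [Nat.mem_divisorsAntidiagonal] at hde
  have hd : 1 ≤ de.1 := by
    rcases Nat.eq_zero_or_pos de.1 with h | h
    · rw [h, Nat.zero_mul] at hde; omega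
    · exact h
  dsimp only
  rw [Finset.sum_const, Nat.card_Ico, nsmul_eq_mul, Nat.cast_sub hd, Nat.cast_one]

lemma diag_d3 (n : ℕ) :
    ∑ s ∈ (Sf n).filter (fun s => s.1.1 = s.2.1), ((s.1.1:ℚ))^4
      = ∑ de ∈ n.divisorsAntidiagonal, ((de.2:ℚ) - 1) * (de.1:ℚ)^4 := by
  have step : ∑ s ∈ (Sf n).filter (fun s => s.1.1 = s.2.1), ((s.1.1:ℚ))^4
      = ∑ p ∈ (n.divisorsAntidiagonal).sigma (fun de => Ico 1 de.2),
          ((p.1.1:ℚ))^4 := by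
    refine Finset.sum_nbij'
      (fun s => ⟨(s.1.1, s.1.2 + s.2.2), s.1.2⟩)
      (fun p => ((p.1.1, p.2), (p.1.1, p.1.2 - p.2))) ?_ ?_ ?_ ?_ ?_
    · rintro ⟨⟨a, x⟩, b, y⟩ hs
      rw [Finset.mem_filter, mem_Sf] at hs
      rw [Finset.mem_sigma, Nat.mem_divisorsAntidiagonal, Finset.mem_Ico]
      dsimp only at hs ⊢
      obtain ⟨⟨ha, hx, hb, hy, heq⟩, hab⟩ := hs
      subst hab
      have h1 : a * (x + y) = a * x + a * y := by rw [Nat.mul_add]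
      have h2 : 1 ≤ a * x := Nat.mul_le_mul ha hx
      exact ⟨⟨by omega, by omega⟩, by omega, by omega⟩
    · rintro ⟨⟨d, e⟩, x⟩ hp
      rw [Finset.mem_sigma, Nat.mem_divisorsAntidiagonal, Finset.mem_Ico] at hp
      rw [Finset.mem_filter, mem_Sf]
      dsimp only at hp ⊢
      obtain ⟨⟨hde, hn⟩, hx1, hxe⟩ := hp
      have hd : 1 ≤ d := by
        rcases Nat.eq_zero_or_pos d with rfl | h
        · rw [Nat.zero_mul] at hde; omega
        · exact h
      have h1 : d * x + d * (e - x) = d * e := by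
        rw [nat_mul_sub' d x e (by omega)]
        have h4 : d * x ≤ d * e := Nat.mul_le_mul (le_refl d) (by omega)
        omega
      exact ⟨⟨hd, hx1, hd, by omega, by omega⟩, rfl⟩
    · rintro ⟨⟨a, x⟩, b, y⟩ hs
      rw [Finset.mem_filter, mem_Sf] at hs
      dsimp only at hs
      obtain ⟨⟨ha, hx, hb, hy, heq⟩, hab⟩ := hs
      dsimp only
      rw [show x + y - x = y from by omega, hab]
    · rintro ⟨⟨d, e⟩, x⟩ hp
      rw [Finset.mem_sigma, Nat.mem_divisorsAntidiagonal, Finset.mem_Ico] at hp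
      dsimp only at hp
      obtain ⟨⟨hde, hn⟩, hx1, hxe⟩ := hp
      dsimp only
      rw [show x + (e - x) = e from by omega]
    · rintro ⟨⟨a, x⟩, b, y⟩ _; rfl
  refine step.trans ((Finset.sum_sigma _ _ _).trans (Finset.sum_congr rfl ?_))
  intro de hde
  rw [Nat.mem_divisorsAntidiagonal] at hde
  have he : 1 ≤ de.2 := by
    rcases Nat.eq_zero_or_pos de.2 with h | h
    · rw [h, Nat.mul_zero] at hde; omega
    · exact h
  dsimp only
  rw [Finset.sum_const, Nat.card_Ico, nsmul_eq_mul, Nat.cast_sub he, Nat.cast_one]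

lemma diag_zero (n : ℕ) :
    ∑ s ∈ (Sf n).filter (fun s => s.1.1 = s.2.1), ((s.1.1:ℚ) - (s.2.1:ℚ))^4 = 0 := by
  refine Finset.sum_eq_zero ?_
  rintro ⟨⟨a, x⟩, b, y⟩ hs
  rw [Finset.mem_filter] at hs
  have hab : a = b := hs.2
  dsimp only
  rw [hab]
  ring

lemma key_count (n : ℕ) :
    (16:ℚ) * ∑ s ∈ Sf n, (s.1.1:ℚ) * (s.2.1:ℚ)^3
      = 2 * (∑ de ∈ n.divisorsAntidiagonal, ∑ a ∈ Ico 1 de.1, (a:ℚ)^4)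
        + (∑ de ∈ n.divisorsAntidiagonal, ((de.1:ℚ) - 1) * (de.1:ℚ)^4)
        - 2 * (∑ de ∈ n.divisorsAntidiagonal, ((de.2:ℚ) - 1) * (de.1:ℚ)^4) := by
  have h1 := sum_tri (Sf n) (fun s => ((s.1.1:ℚ))^4) (fun s => s.1.2) (fun s => s.2.2)
  have h2 := sum_tri (Sf n) (fun s => ((s.1.1:ℚ))^4) (fun s => s.1.1) (fun s => s.2.1)
  have h6 := sum_tri (Sf n) (fun s => ((s.1.1:ℚ) + (s.2.1:ℚ))^4)
    (fun s => s.1.2) (fun s => s.2.2)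
  have h5 := sum_tri (Sf n) (fun s => ((s.1.1:ℚ) - (s.2.1:ℚ))^4)
    (fun s => s.1.1) (fun s => s.2.1)
  have h3 := transport_h3 n
  have h4 := transport_h4 n
  have hI3 := transport_I3 n
  have h5a := transport_h5a n
  have h5b := transport_h5b n
  have hA4c := transport_A4c n
  have h8 := transport_h8 n
  have hd1 := diag_d1 n
  have hd2 := diag_d2 n
  have hd3 := diag_d3 n
  have hz := diag_zero n
  have h7 : ∑ s ∈ Sf n, ((s.1.1:ℚ) - (s.2.1:ℚ))^4
      - ∑ s ∈ Sf n, ((s.1.1:ℚ) + (s.2.1:ℚ))^4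
      = -8 * ∑ s ∈ Sf n, (s.1.1:ℚ)^3 * (s.2.1:ℚ)
        - 8 * ∑ s ∈ Sf n, (s.1.1:ℚ) * (s.2.1:ℚ)^3 := by
    rw [← Finset.sum_sub_distrib]
    have hpt : ∀ s ∈ Sf n,
        ((s.1.1:ℚ) - (s.2.1:ℚ))^4 - ((s.1.1:ℚ) + (s.2.1:ℚ))^4
          = -8 * ((s.1.1:ℚ)^3 * (s.2.1:ℚ)) - 8 * ((s.1.1:ℚ) * (s.2.1:ℚ)^3) :=
      fun s _ => by ring
    rw [Finset.sum_congr rfl hpt, Finset.sum_sub_distrib, ← Finset.mul_sum, ← Finset.mul_sum]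
  linarith

lemma divisor_identity (n : ℕ) :
    720 * ((n:ℚ) * (sigmaFn 3 n : ℚ))
      = 240 * (sigmaFn 3 n : ℚ) - 24 * (sigmaFn 1 n : ℚ) + 504 * (sigmaFn 5 n : ℚ)
        - 5760 * ∑ s ∈ Sf n, (s.1.1:ℚ) * (s.2.1:ℚ)^3 := by
  have hkey := key_count n
  have hsig1 := sigmaFn_one_cast n
  have hsig3 := sigmaFn_cast 3 n
  have hsig5 := sigmaFn_cast 5 n
  have hFa : (∑ de ∈ n.divisorsAntidiagonal, ∑ a ∈ Ico 1 de.1, (a:ℚ)^4)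
      = ∑ de ∈ n.divisorsAntidiagonal,
          (6*(de.1:ℚ)^5 - 15*(de.1:ℚ)^4 + 10*(de.1:ℚ)^3 - (de.1:ℚ))/30 :=
    Finset.sum_congr rfl fun de _ => sum_pow4 de.1
  have hsplitFa : ∑ de ∈ n.divisorsAntidiagonal,
        (6*(de.1:ℚ)^5 - 15*(de.1:ℚ)^4 + 10*(de.1:ℚ)^3 - (de.1:ℚ))/30
      = (6*(∑ de ∈ n.divisorsAntidiagonal, (de.1:ℚ)^5)
          - 15*(∑ de ∈ n.divisorsAntidiagonal, (de.1:ℚ)^4)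
          + 10*(∑ de ∈ n.divisorsAntidiagonal, (de.1:ℚ)^3)
          - (∑ de ∈ n.divisorsAntidiagonal, (de.1:ℚ)))/30 := by
    rw [← Finset.sum_div]
    congr 1
    rw [Finset.sum_sub_distrib, Finset.sum_add_distrib, Finset.sum_sub_distrib,
      ← Finset.mul_sum, ← Finset.mul_sum, ← Finset.mul_sum]
  have hsplitB : ∑ de ∈ n.divisorsAntidiagonal, ((de.1:ℚ) - 1) * (de.1:ℚ)^4
      = (∑ de ∈ n.divisorsAntidiagonal, (de.1:ℚ)^5)
        - (∑ de ∈ n.divisorsAntidiagonal, (de.1:ℚ)^4) := by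
    have hpt : ∀ de ∈ n.divisorsAntidiagonal,
        ((de.1:ℚ) - 1) * (de.1:ℚ)^4 = (de.1:ℚ)^5 - (de.1:ℚ)^4 := fun de _ => by ring
    rw [Finset.sum_congr rfl hpt, Finset.sum_sub_distrib]
  have hsplitC : ∑ de ∈ n.divisorsAntidiagonal, ((de.2:ℚ) - 1) * (de.1:ℚ)^4
      = (∑ de ∈ n.divisorsAntidiagonal, (de.1:ℚ)^4 * (de.2:ℚ))
        - (∑ de ∈ n.divisorsAntidiagonal, (de.1:ℚ)^4) := by
    have hpt : ∀ de ∈ n.divisorsAntidiagonal,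
        ((de.2:ℚ) - 1) * (de.1:ℚ)^4 = (de.1:ℚ)^4 * (de.2:ℚ) - (de.1:ℚ)^4 :=
      fun de _ => by ring
    rw [Finset.sum_congr rfl hpt, Finset.sum_sub_distrib]
  have hn3 : (n:ℚ) * (sigmaFn 3 n : ℚ)
      = ∑ de ∈ n.divisorsAntidiagonal, (de.1:ℚ)^4 * (de.2:ℚ) := by
    rw [sigmaFn_cast 3 n, Finset.mul_sum]
    refine Finset.sum_congr rfl ?_
    intro de hde
    rw [Nat.mem_divisorsAntidiagonal] at hde
    have hc : (de.1:ℚ) * (de.2:ℚ) = (n:ℚ) := by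
      have h := hde.1
      have h2 : ((de.1 * de.2 : ℕ) : ℚ) = (n:ℚ) := by rw [h]
      push_cast at h2
      exact h2
    linear_combination (-(de.1:ℚ)^3) * hc
  linarith

lemma conv_unfold (m : ℕ) :
    ∑ i ∈ range m, (sigmaFn 1 (i+1) : ℚ) * (sigmaFn 3 (m - i) : ℚ)
      = ∑ s ∈ Sf (m+1), (s.1.1:ℚ) * (s.2.1:ℚ)^3 := by
  have step1 : ∑ i ∈ range m, (sigmaFn 1 (i+1) : ℚ) * (sigmaFn 3 (m - i) : ℚ)
      = ∑ i ∈ range m, ∑ p ∈ (i+1).divisorsAntidiagonal ×ˢ (m-i).divisorsAntidiagonal,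
          (p.1.1:ℚ) * (p.2.1:ℚ)^3 := by
    refine Finset.sum_congr rfl ?_
    intro i _
    rw [sigmaFn_one_cast (i+1), sigmaFn_cast 3 (m-i), Finset.sum_mul_sum]
    exact (Finset.sum_product _ _
      (fun p : (ℕ×ℕ)×(ℕ×ℕ) => (p.1.1:ℚ) * (p.2.1:ℚ)^3)).symm
  have step2 : ∑ p ∈ (range m).sigma
        (fun i => (i+1).divisorsAntidiagonal ×ˢ (m-i).divisorsAntidiagonal),
        ((p.2.1.1:ℚ) * (p.2.2.1:ℚ)^3)
      = ∑ s ∈ Sf (m+1), (s.1.1:ℚ) * (s.2.1:ℚ)^3 := by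
    refine Finset.sum_nbij' (fun p => p.2) (fun s => ⟨s.1.1 * s.1.2 - 1, s⟩) ?_ ?_ ?_ ?_ ?_
    · rintro ⟨i, ⟨⟨a, x⟩, b, y⟩⟩ hp
      rw [Finset.mem_sigma, Finset.mem_product, Nat.mem_divisorsAntidiagonal,
        Nat.mem_divisorsAntidiagonal, Finset.mem_range] at hp
      rw [mem_Sf]
      dsimp only at hp ⊢
      obtain ⟨hi, ⟨hax, hax0⟩, hby, hbyne⟩ := hp
      have ha : a ≠ 0 ∧ x ≠ 0 := Nat.mul_ne_zero_iff.mp (by omega)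
      have hb : b ≠ 0 ∧ y ≠ 0 := Nat.mul_ne_zero_iff.mp (by omega)
      exact ⟨by omega, by omega, by omega, by omega, by omega⟩
    · rintro ⟨⟨a, x⟩, b, y⟩ hs
      rw [mem_Sf] at hs
      rw [Finset.mem_sigma, Finset.mem_product, Nat.mem_divisorsAntidiagonal,
        Nat.mem_divisorsAntidiagonal, Finset.mem_range]
      dsimp only at hs ⊢
      obtain ⟨ha, hx, hb, hy, heq⟩ := hs
      have h1 : 1 ≤ a * x := Nat.mul_le_mul ha hx
      have h2 : 1 ≤ b * y := Nat.mul_le_mul hb hy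
      exact ⟨by omega, ⟨by omega, by omega⟩, by omega, by omega⟩
    · rintro ⟨i, ⟨⟨a, x⟩, b, y⟩⟩ hp
      rw [Finset.mem_sigma, Finset.mem_product, Nat.mem_divisorsAntidiagonal,
        Nat.mem_divisorsAntidiagonal, Finset.mem_range] at hp
      dsimp only at hp
      obtain ⟨hi, ⟨hax, hax0⟩, hby, hbyne⟩ := hp
      dsimp only
      rw [show a * x - 1 = i from by omega]
    · rintro ⟨⟨a, x⟩, b, y⟩ _; rfl
    · rintro ⟨i, ⟨⟨a, x⟩, b, y⟩⟩ _; rfl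
  rw [step1]
  rw [Finset.sum_sigma (range m)
    (fun i => (i+1).divisorsAntidiagonal ×ˢ (m-i).divisorsAntidiagonal)
    (fun p => (p.2.1.1:ℚ) * (p.2.2.1:ℚ)^3)] at step2
  exact step2

lemma coeff_Eis2_zero : PowerSeries.coeff (R := ℚ) 0 Eis2 = 1 := by simp [Eis2]
lemma coeff_Eis4_zero : PowerSeries.coeff (R := ℚ) 0 Eis4 = 1 := by simp [Eis4]
lemma coeff_Eis2_pos {k : ℕ} (hk : k ≠ 0) :
    PowerSeries.coeff (R := ℚ) k Eis2 = -24 * (sigmaFn 1 k : ℚ) := by simp [Eis2, hk]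
lemma coeff_Eis4_pos {k : ℕ} (hk : k ≠ 0) :
    PowerSeries.coeff (R := ℚ) k Eis4 = 240 * (sigmaFn 3 k : ℚ) := by simp [Eis4, hk]
lemma coeff_Eis6_pos {k : ℕ} (hk : k ≠ 0) :
    PowerSeries.coeff (R := ℚ) k Eis6 = -504 * (sigmaFn 5 k : ℚ) := by simp [Eis6, hk]

lemma coeff_mul_E2E4 (m : ℕ) :
    PowerSeries.coeff (R := ℚ) (m+1) (Eis2 * Eis4)
      = 240 * (sigmaFn 3 (m+1) : ℚ) - 24 * (sigmaFn 1 (m+1) : ℚ)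
        - 5760 * ∑ s ∈ Sf (m+1), (s.1.1:ℚ) * (s.2.1:ℚ)^3 := by
  rw [PowerSeries.coeff_mul]
  rw [Finset.Nat.sum_antidiagonal_eq_sum_range_succ_mk]
  simp only [Nat.succ_eq_add_one]
  rw [Finset.sum_range_succ', Finset.sum_range_succ]
  have hmid : ∑ i ∈ range m,
      PowerSeries.coeff (R := ℚ) (i+1) Eis2 * PowerSeries.coeff (R := ℚ) (m+1-(i+1)) Eis4
      = -5760 * ∑ i ∈ range m, (sigmaFn 1 (i+1) : ℚ) * (sigmaFn 3 (m - i) : ℚ) := by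
    rw [Finset.mul_sum]
    refine Finset.sum_congr rfl ?_
    intro i hi
    rw [Finset.mem_range] at hi
    have h1 : m + 1 - (i + 1) = m - i := by omega
    rw [h1, coeff_Eis2_pos (Nat.succ_ne_zero i), coeff_Eis4_pos (by omega : m - i ≠ 0)]
    ring
  rw [hmid, Nat.sub_self, Nat.sub_zero, coeff_Eis2_pos (Nat.succ_ne_zero m),
    coeff_Eis4_zero, coeff_Eis2_zero, coeff_Eis4_pos (Nat.succ_ne_zero m)]
  rw [conv_unfold m]
  ring

/-- Ramanujan's identity: q·(d/dq)E₄ = (E₂·E₄ − E₆)/3. -/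
theorem ramanujan_D_E4 : Dq Eis4 = PowerSeries.C (R := ℚ) (1 / 3) * (Eis2 * Eis4 - Eis6) := by
  ext n
  rw [PowerSeries.coeff_C_mul, map_sub]
  simp only [Dq, PowerSeries.coeff_mk]
  rcases n with _ | m
  · rw [PowerSeries.coeff_mul]
    simp [Eis2, Eis4, Eis6]
  · rw [coeff_mul_E2E4 m, coeff_Eis6_pos (Nat.succ_ne_zero m),
      coeff_Eis4_pos (Nat.succ_ne_zero m)]
    have hdiv := divisor_identity (m+1)
    push_cast at hdiv ⊢
    linarith
end
end
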